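/- arXiv:2509.15013 — 4 statements merged into one kernel-verified Lean document; each statement's English description precedes it below -/
import Mathlib

section
/- Let H be the parity-check matrix of an (m, n, a=1, b=1, h) grid code over a finite field F_q, and suppose H is MR. Let h' ≤ h and let C_1, …, C_{h'} ⊆ [m]×[n] be simple cycles with the following two properties: (1) there exists an acyclic subgraph T ⊆ C_1 ∪ ⋯ ∪ C_{h'} such that |(C_1 ∪ ⋯ ∪ C_{h'}) \ T| ≤ h; and (2) for every ℓ ∈ [h'] there exists an edge (i_ℓ,j_ℓ) ∈ C_ℓ that does not appear in C_{ℓ'} for any ℓ' ∈ [h'] with ℓ' ≠ ℓ. Then the cycle sums Σ_H(C_1), …, Σ_H(C_{h'}) ∈ F_q^h are linearly independent over F_q. -/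
open Finset

/-- A subset of `[m] × [n]`, viewed as the edge set of a bipartite graph with left
vertex set `Fin m` and right vertex set `Fin n`, is a *simple cycle* (of length `2k`,
`k ≥ 2`) if it has the form
`{(i₁,j₁),(i₂,j₁),(i₂,j₂),(i₃,j₂),…,(i_k,j_k),(i₁,j_k)}`
for pairwise distinct `i₁,…,i_k` and pairwise distinct `j₁,…,j_k`. -/
def IsSimpleCycle {m n : ℕ} (C : Finset (Fin m × Fin n)) : Prop :=
  ∃ k : ℕ, 2 ≤ k ∧ ∃ (I : ℕ → Fin m) (J : ℕ → Fin n),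
    Set.InjOn I (Set.Iio k) ∧ Set.InjOn J (Set.Iio k) ∧
    C = ((Finset.range k).image fun ℓ => (I ℓ, J ℓ)) ∪
        ((Finset.range k).image fun ℓ => (I ((ℓ + 1) % k), J ℓ))

/-- An edge set is *acyclic* if it contains no simple cycle. -/
def IsAcyclicEdges {m n : ℕ} (E : Finset (Fin m × Fin n)) : Prop :=
  ∀ C ⊆ E, ¬ IsSimpleCycle C

/-- The parity-check matrix of an `(m, n, a = 1, b = 1, h)` grid code over `F` with
global parity-check vectors `c`.  Rows are indexed by `Fin m ⊕ (Fin (n-1) ⊕ Fin h)`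
(the `m` row checks, the first `n - 1` column checks, and the `h` global checks) and
columns by `Fin m × Fin n`. -/
def gridH (F : Type*) [Field F] (m n h : ℕ) (c : Fin m × Fin n → Fin h → F) :
    Matrix (Fin m ⊕ (Fin (n - 1) ⊕ Fin h)) (Fin m × Fin n) F :=
  Matrix.of fun r ij =>
    Sum.elim (fun i => if ij.1 = i then (1 : F) else 0)
      (Sum.elim (fun j : Fin (n - 1) => if (ij.2 : ℕ) = (j : ℕ) then (1 : F) else 0)
        (fun k => c ij k)) r

/-- The grid code with global parity checks `c` is *maximally recoverable* (MR) if the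
columns of its parity-check matrix indexed by `E` are linearly independent for every
pattern `E` which is the union of an acyclic edge set and at most `h` further edges. -/
def IsMR (F : Type*) [Field F] (m n h : ℕ) (c : Fin m × Fin n → Fin h → F) : Prop :=
  ∀ E : Finset (Fin m × Fin n),
    (∃ E' F' : Finset (Fin m × Fin n),
        IsAcyclicEdges E' ∧ F'.card ≤ h ∧ E = E' ∪ F') →
    ((gridH F m n h c).submatrix id (fun e : E => (e : Fin m × Fin n))).rank = E.card

/-- A *spanning tree* of the complete bipartite graph on `[m] ⊔ [n]`: an acyclic edge
set with `m + n - 1` edges. -/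
def IsSpanningTree {m n : ℕ} (T : Finset (Fin m × Fin n)) : Prop :=
  IsAcyclicEdges T ∧ T.card = m + n - 1

/-- `IsCycleSumOf c C s` says `C` is a simple cycle
`{(i₁,j₁),(i₂,j₁),…,(i_k,j_k),(i₁,j_k)}` and
`s = Σ_{ℓ=1}^{k} (c^{i_ℓ,j_ℓ} − c^{i_{ℓ+1},j_ℓ})` (with `i_{k+1} := i₁`) is the
corresponding cycle sum `Σ_H(C) ∈ F^h`. -/
def IsCycleSumOf {F : Type*} [Field F] {m n h : ℕ} (c : Fin m × Fin n → Fin h → F)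
    (C : Finset (Fin m × Fin n)) (s : Fin h → F) : Prop :=
  ∃ k : ℕ, 2 ≤ k ∧ ∃ (I : ℕ → Fin m) (J : ℕ → Fin n),
    Set.InjOn I (Set.Iio k) ∧ Set.InjOn J (Set.Iio k) ∧
    C = ((Finset.range k).image fun ℓ => (I ℓ, J ℓ)) ∪
        ((Finset.range k).image fun ℓ => (I ((ℓ + 1) % k), J ℓ)) ∧
    s = ∑ ℓ ∈ Finset.range k, (c (I ℓ, J ℓ) - c (I ((ℓ + 1) % k), J ℓ))

/-- `IsGammaCycleSumOf γ C g` says `C` is a simple cycle and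
`g = γ(C) = Σ_{ℓ=1}^{k} (γ(i_ℓ,j_ℓ) − γ(i_{ℓ+1},j_ℓ))`. -/
def IsGammaCycleSumOf {F : Type*} [Field F] {m n : ℕ} (γ : Fin m × Fin n → F)
    (C : Finset (Fin m × Fin n)) (g : F) : Prop :=
  ∃ k : ℕ, 2 ≤ k ∧ ∃ (I : ℕ → Fin m) (J : ℕ → Fin n),
    Set.InjOn I (Set.Iio k) ∧ Set.InjOn J (Set.Iio k) ∧
    C = ((Finset.range k).image fun ℓ => (I ℓ, J ℓ)) ∪
        ((Finset.range k).image fun ℓ => (I ((ℓ + 1) % k), J ℓ)) ∧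
    g = ∑ ℓ ∈ Finset.range k, (γ (I ℓ, J ℓ) - γ (I ((ℓ + 1) % k), J ℓ))


private lemma succ_mod_lt {k ℓ : ℕ} (hk : 1 ≤ k) : (ℓ + 1) % k < k :=
  Nat.mod_lt _ (by omega)

private lemma succ_mod_ne {k ℓ : ℕ} (hk : 2 ≤ k) (hℓ : ℓ < k) : (ℓ + 1) % k ≠ ℓ := by
  rcases Nat.lt_or_ge (ℓ + 1) k with h | h
  · rw [Nat.mod_eq_of_lt h]; omega
  · have hek : ℓ + 1 = k := by omega
    rw [hek, Nat.mod_self]; omega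

private lemma sum_succ_mod {M : Type*} [AddCommMonoid M] {k : ℕ} (hk : 1 ≤ k) (f : ℕ → M) :
    ∑ ℓ ∈ Finset.range k, f ((ℓ + 1) % k) = ∑ ℓ ∈ Finset.range k, f ℓ := by
  refine Finset.sum_nbij' (i := fun ℓ => (ℓ + 1) % k) (j := fun ℓ => (ℓ + (k - 1)) % k)
    ?_ ?_ ?_ ?_ ?_
  · intro a ha; simp only [Finset.mem_range] at *; exact succ_mod_lt hk
  · intro a ha; simp only [Finset.mem_range] at *; exact Nat.mod_lt _ (by omega)
  · intro a ha; simp only [Finset.mem_range] at ha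
    show ((a + 1) % k + (k - 1)) % k = a
    rw [Nat.mod_add_mod]
    have h1 : a + 1 + (k - 1) = a + k := by omega
    rw [h1, Nat.add_mod_right, Nat.mod_eq_of_lt ha]
  · intro a ha; simp only [Finset.mem_range] at ha
    show ((a + (k - 1)) % k + 1) % k = a
    rw [Nat.mod_add_mod]
    have h1 : a + (k - 1) + 1 = a + k := by omega
    rw [h1, Nat.add_mod_right, Nat.mod_eq_of_lt ha]
  · intro a ha; rfl

private def cycVec {F : Type*} [Field F] {m n : ℕ} (k : ℕ) (I : ℕ → Fin m) (J : ℕ → Fin n) :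
    Fin m × Fin n → F := fun e =>
  ∑ ℓ ∈ Finset.range k,
    ((if e = (I ℓ, J ℓ) then (1 : F) else 0) -
      (if e = (I ((ℓ + 1) % k), J ℓ) then (1 : F) else 0))

private lemma cycVec_eq_zero {F : Type*} [Field F] {m n : ℕ} {k : ℕ}
    {I : ℕ → Fin m} {J : ℕ → Fin n} {e : Fin m × Fin n}
    (h1 : ∀ ℓ < k, e ≠ (I ℓ, J ℓ)) (h2 : ∀ ℓ < k, e ≠ (I ((ℓ + 1) % k), J ℓ)) :
    cycVec (F := F) k I J e = 0 := by
  apply Finset.sum_eq_zero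
  intro ℓ hℓ
  rw [Finset.mem_range] at hℓ
  simp [if_neg (h1 ℓ hℓ), if_neg (h2 ℓ hℓ)]

private lemma cycVec_forward {F : Type*} [Field F] {m n : ℕ} {k : ℕ}
    {I : ℕ → Fin m} {J : ℕ → Fin n}
    (hk : 2 ≤ k) (hI : Set.InjOn I (Set.Iio k)) (hJ : Set.InjOn J (Set.Iio k))
    {ℓ0 : ℕ} (hℓ0 : ℓ0 < k) : cycVec (F := F) k I J (I ℓ0, J ℓ0) = 1 := by
  unfold cycVec
  rw [Finset.sum_eq_single_of_mem ℓ0 (Finset.mem_range.mpr hℓ0)]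
  · have hne : ((I ℓ0, J ℓ0) : Fin m × Fin n) ≠ (I ((ℓ0 + 1) % k), J ℓ0) := by
      intro hEq
      exact succ_mod_ne hk hℓ0
        (hI (succ_mod_lt (by omega)) hℓ0 (congrArg Prod.fst hEq).symm)
    rw [if_pos rfl, if_neg hne, sub_zero]
  · intro b hb hbne
    rw [Finset.mem_range] at hb
    have hbJ : J ℓ0 ≠ J b := fun hEq => hbne (hJ hb hℓ0 hEq.symm)
    simp [hbJ]

private lemma cycVec_backward {F : Type*} [Field F] {m n : ℕ} {k : ℕ}
    {I : ℕ → Fin m} {J : ℕ → Fin n}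
    (hk : 2 ≤ k) (hI : Set.InjOn I (Set.Iio k)) (hJ : Set.InjOn J (Set.Iio k))
    {ℓ0 : ℕ} (hℓ0 : ℓ0 < k) : cycVec (F := F) k I J (I ((ℓ0 + 1) % k), J ℓ0) = -1 := by
  unfold cycVec
  rw [Finset.sum_eq_single_of_mem ℓ0 (Finset.mem_range.mpr hℓ0)]
  · have hne : ((I ((ℓ0 + 1) % k), J ℓ0) : Fin m × Fin n) ≠ (I ℓ0, J ℓ0) := by
      intro hEq
      exact succ_mod_ne hk hℓ0
        (hI (succ_mod_lt (by omega)) hℓ0 (congrArg Prod.fst hEq))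
    rw [if_pos rfl, if_neg hne, zero_sub]
  · intro b hb hbne
    rw [Finset.mem_range] at hb
    have hbJ : J ℓ0 ≠ J b := fun hEq => hbne (hJ hb hℓ0 hEq.symm)
    simp [hbJ]

private lemma gridH_dot_cycVec {F : Type*} [Field F] {m n h : ℕ}
    (c : Fin m × Fin n → Fin h → F) {k : ℕ} (hk : 2 ≤ k)
    (I : ℕ → Fin m) (J : ℕ → Fin n) (r : Fin m ⊕ (Fin (n - 1) ⊕ Fin h)) :
    ∑ e : Fin m × Fin n, gridH F m n h c r e * cycVec k I J e =
      Sum.elim (fun _ => (0 : F)) (Sum.elim (fun _ => (0 : F))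
        (fun t => ∑ ℓ ∈ Finset.range k,
          (c (I ℓ, J ℓ) t - c (I ((ℓ + 1) % k), J ℓ) t))) r := by
  have key : ∑ e : Fin m × Fin n, gridH F m n h c r e * cycVec k I J e =
      ∑ ℓ ∈ Finset.range k,
        (gridH F m n h c r (I ℓ, J ℓ) - gridH F m n h c r (I ((ℓ + 1) % k), J ℓ)) := by
    unfold cycVec
    simp_rw [Finset.mul_sum]
    rw [Finset.sum_comm]
    refine Finset.sum_congr rfl fun ℓ _ => ?_
    simp [mul_sub, mul_ite, mul_one, mul_zero, Finset.sum_sub_distrib, Finset.sum_ite_eq']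
  rw [key]
  rcases r with i | j | t
  · simp only [gridH, Matrix.of_apply, Sum.elim_inl]
    rw [Finset.sum_sub_distrib,
      sum_succ_mod (by omega : 1 ≤ k) (fun ℓ => if I ℓ = i then (1 : F) else 0), sub_self]
  · simp [gridH]
  · simp [gridH]

/-- Proposition 2.5.  If `H = gridH F m n h c` is MR, `h' ≤ h`, and
`C 0, …, C (h'-1)` are simple cycles such that (1) there is an acyclic subgraph
`T ⊆ C 0 ∪ ⋯ ∪ C (h'-1)` with `|(C 0 ∪ ⋯ ∪ C (h'-1)) \ T| ≤ h`, and (2) each `C ℓ`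
has an edge appearing in no other `C ℓ'`, then the cycle sums `Σ_H(C ℓ)` are linearly
independent over `F`. -/
theorem statement1 (m n h h' : ℕ) (hm : 2 ≤ m) (hn : 2 ≤ n) (hh : 1 ≤ h)
    (hh'pos : 1 ≤ h') (hh' : h' ≤ h)
    (F : Type*) [Field F] [Fintype F] (c : Fin m × Fin n → Fin h → F)
    (hMR : IsMR F m n h c)
    (C : Fin h' → Finset (Fin m × Fin n))
    (hcyc : ∀ ℓ, IsSimpleCycle (C ℓ))
    (h1 : ∃ T : Finset (Fin m × Fin n), T ⊆ Finset.univ.biUnion C ∧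
      IsAcyclicEdges T ∧ ((Finset.univ.biUnion C) \ T).card ≤ h)
    (h2 : ∀ ℓ, ∃ e ∈ C ℓ, ∀ ℓ', ℓ' ≠ ℓ → e ∉ C ℓ')
    (s : Fin h' → Fin h → F) (hs : ∀ ℓ, IsCycleSumOf c (C ℓ) (s ℓ)) :
    LinearIndependent F s := by
  classical
  obtain ⟨T, hTsub, hTacyc, hTcard⟩ := h1
  set E : Finset (Fin m × Fin n) := Finset.univ.biUnion C with hE
  have hrank := hMR E ⟨T, E \ T, hTacyc, hTcard, (Finset.union_sdiff_of_subset hTsub).symm⟩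
  choose k hk I J hI hJ hCeq hseq using hs
  set x : Fin h' → Fin m × Fin n → F := fun ℓ => cycVec (k ℓ) (I ℓ) (J ℓ) with hx
  have hCE : ∀ ℓ, C ℓ ⊆ E := fun ℓ e he => Finset.mem_biUnion.mpr ⟨ℓ, Finset.mem_univ _, he⟩
  have hxzero : ∀ ℓ e, e ∉ C ℓ → x ℓ e = 0 := by
    intro ℓ e he
    refine cycVec_eq_zero ?_ ?_
    · intro a ha hEq
      exact he (by
        rw [hCeq ℓ]
        exact Finset.mem_union_left _
          (Finset.mem_image.mpr ⟨a, Finset.mem_range.mpr ha, hEq.symm⟩))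
    · intro a ha hEq
      exact he (by
        rw [hCeq ℓ]
        exact Finset.mem_union_right _
          (Finset.mem_image.mpr ⟨a, Finset.mem_range.mpr ha, hEq.symm⟩))
  rw [Fintype.linearIndependent_iff]
  intro g hg
  set M := (gridH F m n h c).submatrix id (fun e : E => (e : Fin m × Fin n)) with hM
  set Y : {e // e ∈ E} → F := fun e => ∑ ℓ, g ℓ * x ℓ (e : Fin m × Fin n) with hY
  have hinner : ∀ (ℓ : Fin h') (r), ∑ e : {e // e ∈ E}, gridH F m n h c r e * x ℓ e =
      ∑ e : Fin m × Fin n, gridH F m n h c r e * x ℓ e := by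
    intro ℓ r
    rw [Finset.sum_coe_sort E (fun e => gridH F m n h c r e * x ℓ e)]
    refine Finset.sum_subset (Finset.subset_univ E) ?_
    intro e _ heE
    rw [hxzero ℓ e (fun hc => heE (hCE ℓ hc)), mul_zero]
  have hker : M.mulVec Y = 0 := by
    funext r
    show ∑ e : {e // e ∈ E}, M r e * Y e = 0
    have step1 : ∑ e : {e // e ∈ E}, M r e * Y e =
        ∑ ℓ, g ℓ * ∑ e : {e // e ∈ E}, gridH F m n h c r e * x ℓ e := by
      simp_rw [hY, Finset.mul_sum]
      rw [Finset.sum_comm]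
      refine Finset.sum_congr rfl fun ℓ _ => Finset.sum_congr rfl fun e _ => ?_
      simp [hM, Matrix.submatrix_apply]
      ring
    rw [step1]
    have step2 : ∀ ℓ : Fin h', (∑ e : {e // e ∈ E}, gridH F m n h c r e * x ℓ e) =
        Sum.elim (fun _ => (0 : F)) (Sum.elim (fun _ => (0 : F))
          (fun t => ∑ a ∈ Finset.range (k ℓ),
            (c (I ℓ a, J ℓ a) t - c (I ℓ ((a + 1) % k ℓ), J ℓ a) t))) r := by
      intro ℓ
      rw [hinner ℓ r]
      exact gridH_dot_cycVec c (hk ℓ) (I ℓ) (J ℓ) r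
    simp_rw [step2]
    rcases r with i | j | t
    · simp
    · simp
    · simp only [Sum.elim_inr]
      have hst : ∀ ℓ : Fin h', ∑ a ∈ Finset.range (k ℓ),
          (c (I ℓ a, J ℓ a) t - c (I ℓ ((a + 1) % k ℓ), J ℓ a) t) = s ℓ t := by
        intro ℓ
        have := congrFun (hseq ℓ) t
        rw [Finset.sum_apply] at this
        simpa using this.symm
      simp_rw [hst]
      have := congrFun hg t
      rw [Finset.sum_apply] at this
      simpa using this
  have hY0 : Y = 0 := by
    have hrank' : Module.finrank F (LinearMap.range M.mulVecLin) = E.card := hrank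
    have hfd : Module.finrank F ({e // e ∈ E} → F) = E.card := by
      rw [Module.finrank_pi, Fintype.card_coe]
    have hsum := LinearMap.finrank_range_add_finrank_ker M.mulVecLin
    have hker0 : Module.finrank F (LinearMap.ker M.mulVecLin) = 0 := by omega
    have hbot : LinearMap.ker M.mulVecLin = ⊥ := Submodule.finrank_eq_zero.mp hker0
    have hmem : Y ∈ LinearMap.ker M.mulVecLin := by
      rw [LinearMap.mem_ker, Matrix.mulVecLin_apply, hker]
    rw [hbot, Submodule.mem_bot] at hmem
    exact hmem
  intro ℓ0
  obtain ⟨e0, he0C, he0uniq⟩ := h2 ℓ0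
  have he0E : e0 ∈ E := hCE ℓ0 he0C
  have hYe : Y ⟨e0, he0E⟩ = g ℓ0 * x ℓ0 e0 := by
    rw [hY]
    exact Fintype.sum_eq_single ℓ0 fun ℓ hne => by
      rw [hxzero ℓ e0 (he0uniq ℓ hne), mul_zero]
  have hxval : x ℓ0 e0 = 1 ∨ x ℓ0 e0 = -1 := by
    have := he0C
    rw [hCeq ℓ0, Finset.mem_union] at this
    rcases this with hmem | hmem
    · obtain ⟨a, ha, hEq⟩ := Finset.mem_image.mp hmem
      rw [Finset.mem_range] at ha
      left
      rw [hx, ← hEq]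
      exact cycVec_forward (hk ℓ0) (hI ℓ0) (hJ ℓ0) ha
    · obtain ⟨a, ha, hEq⟩ := Finset.mem_image.mp hmem
      rw [Finset.mem_range] at ha
      right
      rw [hx, ← hEq]
      exact cycVec_backward (hk ℓ0) (hI ℓ0) (hJ ℓ0) ha
  have hzero : g ℓ0 * x ℓ0 e0 = 0 := by rw [← hYe, hY0]; rfl
  rcases hxval with hv | hv
  · rw [hv, mul_one] at hzero; exact hzero
  · rw [hv] at hzero
    have : -(g ℓ0) = 0 := by rw [← hzero]; ring
    simpa using this
end

section
/- Let m, n, h ≥ 1, let T ⊆ [m]×[n] be a spanning tree of the complete bipartite graph on [m] ⊔ [n], and let (i_1,j_1), …, (i_h,j_h) ∈ ([m]×[n]) \ T be any h edges not in T. Then the union of the fundamental cycles satisfies |C_{T,(i_1,j_1)} ∪ ⋯ ∪ C_{T,(i_h,j_h)}| ≤ 2(m+h−1). -/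
open Finset

private lemma exists_cycle_of_min_degree {m n : ℕ} (E : Finset (Fin m × Fin n))
    (q0 : Fin m × Fin n) (hq0 : q0 ∈ E)
    (hdeg : ∀ q ∈ E, (∃ i', i' ≠ q.1 ∧ (i', q.2) ∈ E) ∧ (∃ j', j' ≠ q.2 ∧ (q.1, j') ∈ E)) :
    ∃ C ⊆ E, IsSimpleCycle C := by
  classical
  -- Step 1: build an infinite non-backtracking walk
  have hseq : ∃ (I : ℕ → Fin m) (J : ℕ → Fin n), ∀ ℓ,
      (I ℓ, J ℓ) ∈ E ∧ I (ℓ+1) ≠ I ℓ ∧ J (ℓ+1) ≠ J ℓ ∧ (I (ℓ+1), J ℓ) ∈ E := by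
    have step : ∀ q : {q : Fin m × Fin n // q ∈ E}, ∃ q' : {q : Fin m × Fin n // q ∈ E},
        q'.1.1 ≠ q.1.1 ∧ q'.1.2 ≠ q.1.2 ∧ (q'.1.1, q.1.2) ∈ E := by
      rintro ⟨q, hq⟩
      obtain ⟨⟨i', hi1, hi2⟩, -⟩ := hdeg q hq
      obtain ⟨-, j', hj1, hj2⟩ := hdeg (i', q.2) hi2
      exact ⟨⟨(i', j'), hj2⟩, hi1, hj1, hi2⟩
    choose F hF1 hF2 hF3 using step
    set p : ℕ → {q : Fin m × Fin n // q ∈ E} := fun ℓ => F^[ℓ] ⟨q0, hq0⟩ with hp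
    have hsucc : ∀ ℓ, p (ℓ+1) = F (p ℓ) := fun ℓ => Function.iterate_succ_apply' F ℓ _
    refine ⟨fun ℓ => (p ℓ).1.1, fun ℓ => (p ℓ).1.2, fun ℓ => ⟨by simpa using (p ℓ).2, ?_, ?_, ?_⟩⟩
    · show (p (ℓ+1)).1.1 ≠ (p ℓ).1.1
      rw [hsucc]; exact hF1 (p ℓ)
    · show (p (ℓ+1)).1.2 ≠ (p ℓ).1.2
      rw [hsucc]; exact hF2 (p ℓ)
    · show ((p (ℓ+1)).1.1, (p ℓ).1.2) ∈ E
      rw [hsucc]; exact hF3 (p ℓ)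
  obtain ⟨I, J, hseq⟩ := hseq
  have hmem : ∀ ℓ, (I ℓ, J ℓ) ∈ E := fun ℓ => (hseq ℓ).1
  have hInb : ∀ ℓ, I (ℓ+1) ≠ I ℓ := fun ℓ => (hseq ℓ).2.1
  have hJnb : ∀ ℓ, J (ℓ+1) ≠ J ℓ := fun ℓ => (hseq ℓ).2.2.1
  have hcross : ∀ ℓ, (I (ℓ+1), J ℓ) ∈ E := fun ℓ => (hseq ℓ).2.2.2
  -- Step 2: find the first repetition
  have hex : ∃ t, ∃ s, s < t ∧ (I s = I t ∨ J s = J t) := by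
    by_contra hcon
    push_neg at hcon
    have hinj : Set.InjOn I ↑(Finset.range (m+1)) := by
      intro a _ b _ hab
      rcases Nat.lt_trichotomy a b with hlt | heq | hgt
      · exact absurd hab ((hcon b a hlt).1)
      · exact heq
      · exact absurd hab.symm ((hcon a b hgt).1)
    have hcard := Finset.card_le_card_of_injOn (s := Finset.range (m+1))
      (t := Finset.univ) I (fun x _ => Finset.mem_univ _) hinj
    simp at hcard
  obtain ⟨s, hslt, hst⟩ := Nat.find_spec hex
  set t := Nat.find hex with hts
  have hmin : ∀ a b, b < a → a < t → I b ≠ I a ∧ J b ≠ J a := by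
    intro a b hba hat
    have := Nat.find_min hex hat
    push_neg at this
    exact this b hba
  have hIinj : Set.InjOn I (Set.Iio t) := by
    intro a ha b hb hab
    rcases Nat.lt_trichotomy a b with h | h | h
    · exact absurd hab (hmin b a h hb).1
    · exact h
    · exact absurd hab.symm (hmin a b h ha).1
  have hJinj : Set.InjOn J (Set.Iio t) := by
    intro a ha b hb hab
    rcases Nat.lt_trichotomy a b with h | h | h
    · exact absurd hab (hmin b a h hb).2
    · exact h
    · exact absurd hab.symm (hmin a b h ha).2
  by_cases hA : ∃ a, a < t ∧ I a = I t
  · -- Case A: a left vertex repeats first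
    obtain ⟨a, halt, ha⟩ := hA
    set k := t - a with hk
    have hk2 : 2 ≤ k := by
      rcases Nat.lt_or_ge k 2 with h | h
      · exfalso
        apply hInb a
        rw [show a + 1 = t by omega]
        exact ha.symm
      · exact h
    refine ⟨_, ?_, k, hk2, fun ℓ => I (a + ℓ), fun ℓ => J (a + ℓ), ?_, ?_, rfl⟩
    · refine Finset.union_subset ?_ ?_ <;> rw [Finset.image_subset_iff] <;>
        intro ℓ hℓ <;> rw [Finset.mem_range] at hℓ
      · exact hmem (a + ℓ)
      · show (I (a + (ℓ + 1) % k), J (a + ℓ)) ∈ E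
        rcases Nat.lt_or_ge (ℓ + 1) k with h | h
        · rw [Nat.mod_eq_of_lt h, show a + (ℓ + 1) = (a + ℓ) + 1 by omega]
          exact hcross (a + ℓ)
        · have hℓk : ℓ + 1 = k := by omega
          rw [hℓk, Nat.mod_self, Nat.add_zero]
          have h1 : I a = I ((a + ℓ) + 1) := by rw [ha]; congr 1; omega
          rw [h1]
          exact hcross (a + ℓ)
    · intro x hx y hy hxy
      have := hIinj (show a + x ∈ Set.Iio t by simp at hx ⊢; omega)
        (show a + y ∈ Set.Iio t by simp at hy ⊢; omega) hxy
      omega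
    · intro x hx y hy hxy
      have := hJinj (show a + x ∈ Set.Iio t by simp at hx ⊢; omega)
        (show a + y ∈ Set.Iio t by simp at hy ⊢; omega) hxy
      omega
  · -- Case B: a right vertex repeats first
    push_neg at hA
    have hJst : J s = J t := by
      rcases hst with h | h
      · exact absurd h (hA s hslt)
      · exact h
    set k := t - s with hk
    have hk2 : 2 ≤ k := by
      rcases Nat.lt_or_ge k 2 with h | h
      · exfalso
        apply hJnb s
        rw [show s + 1 = t by omega]
        exact hJst.symm
      · exact h
    refine ⟨_, ?_, k, hk2, fun ℓ => I (s + 1 + ℓ), fun ℓ => J (s + 1 + ℓ), ?_, ?_, rfl⟩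
    · refine Finset.union_subset ?_ ?_ <;> rw [Finset.image_subset_iff] <;>
        intro ℓ hℓ <;> rw [Finset.mem_range] at hℓ
      · exact hmem (s + 1 + ℓ)
      · show (I (s + 1 + (ℓ + 1) % k), J (s + 1 + ℓ)) ∈ E
        rcases Nat.lt_or_ge (ℓ + 1) k with h | h
        · rw [Nat.mod_eq_of_lt h, show s + 1 + (ℓ + 1) = (s + 1 + ℓ) + 1 by omega]
          exact hcross (s + 1 + ℓ)
        · have hℓk : ℓ + 1 = k := by omega
          rw [hℓk, Nat.mod_self, Nat.add_zero]
          have h1 : J (s + 1 + ℓ) = J s := by rw [hJst]; congr 1; omega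
          rw [h1]
          exact hcross s
    · intro x hx y hy hxy
      simp only [Set.mem_Iio] at hx hy
      by_cases hxt : s + 1 + x = t
      · by_cases hyt : s + 1 + y = t
        · omega
        · have hxy' : I (s + 1 + x) = I (s + 1 + y) := hxy
          exact absurd (hxt ▸ hxy').symm (hA (s + 1 + y) (by omega))
      · by_cases hyt : s + 1 + y = t
        · have hxy' : I (s + 1 + x) = I (s + 1 + y) := hxy
          exact absurd (hyt ▸ hxy') (hA (s + 1 + x) (by omega))
        · have := hIinj (show s + 1 + x ∈ Set.Iio t by simp; omega)
            (show s + 1 + y ∈ Set.Iio t by simp; omega) hxy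
          omega
    · intro x hx y hy hxy
      simp only [Set.mem_Iio] at hx hy
      by_cases hxt : s + 1 + x = t
      · by_cases hyt : s + 1 + y = t
        · omega
        · exfalso
          have h1 : J s = J (s + 1 + y) := by rw [hJst, ← hxt]; exact hxy
          have := hJinj (show s ∈ Set.Iio t by simp; omega)
            (show s + 1 + y ∈ Set.Iio t by simp; omega) h1
          omega
      · by_cases hyt : s + 1 + y = t
        · exfalso
          have h1 : J (s + 1 + x) = J s := by rw [hJst, ← hyt]; exact hxy
          have := hJinj (show s + 1 + x ∈ Set.Iio t by simp; omega)
            (show s ∈ Set.Iio t by simp; omega) h1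
          omega
        · have := hJinj (show s + 1 + x ∈ Set.Iio t by simp; omega)
            (show s + 1 + y ∈ Set.Iio t by simp; omega) hxy
          omega

private lemma forest_bound {m n : ℕ} (E : Finset (Fin m × Fin n)) :
    IsAcyclicEdges E → E.Nonempty →
    E.card + 1 ≤ (E.image Prod.fst).card + (E.image Prod.snd).card := by
  classical
  induction E using Finset.strongInduction with
  | _ E ih =>
    intro hacy hne
    have hdeg : ¬ ∀ q ∈ E, (∃ i', i' ≠ q.1 ∧ (i', q.2) ∈ E) ∧
        (∃ j', j' ≠ q.2 ∧ (q.1, j') ∈ E) := by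
      intro hdeg
      obtain ⟨q0, hq0⟩ := hne
      obtain ⟨Cc, hCE, hCc⟩ := exists_cycle_of_min_degree E q0 hq0 hdeg
      exact hacy Cc hCE hCc
    push_neg at hdeg
    obtain ⟨q, hq, hcase⟩ := hdeg
    have hL1 : q.1 ∈ E.image Prod.fst := Finset.mem_image_of_mem _ hq
    have hR1 : q.2 ∈ E.image Prod.snd := Finset.mem_image_of_mem _ hq
    have hacy' : IsAcyclicEdges (E.erase q) :=
      fun Cc hCc => hacy Cc (hCc.trans (Finset.erase_subset _ _))
    have hcards : ∀ (b : Bool),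
        (b = true → q.1 ∉ (E.erase q).image Prod.fst) →
        (b = false → q.2 ∉ (E.erase q).image Prod.snd) →
        E.card + 1 ≤ (E.image Prod.fst).card + (E.image Prod.snd).card := by
      intro b hb1 hb2
      have hcard : (E.erase q).card + 1 = E.card := Finset.card_erase_add_one hq
      rcases Finset.eq_empty_or_nonempty (E.erase q) with hemp | hne'
      · have : E.card = 1 := by
          have := Finset.card_erase_add_one hq
          rw [hemp] at this
          simpa using this.symm
        have h1 : 1 ≤ (E.image Prod.fst).card := Finset.card_pos.mpr ⟨q.1, hL1⟩
        have h2 : 1 ≤ (E.image Prod.snd).card := Finset.card_pos.mpr ⟨q.2, hR1⟩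
        omega
      · have hih := ih (E.erase q) (Finset.erase_ssubset hq) hacy' hne'
        cases b with
        | true =>
          have hnot := hb1 rfl
          have hsubL : (E.erase q).image Prod.fst ⊆ (E.image Prod.fst).erase q.1 := by
            intro x hx
            refine Finset.mem_erase.mpr ⟨?_, ?_⟩
            · rintro rfl; exact hnot hx
            · exact Finset.image_subset_image (Finset.erase_subset _ _) hx
          have hL := Finset.card_le_card hsubL
          rw [Finset.card_erase_of_mem hL1] at hL
          have hR := Finset.card_le_card
            (Finset.image_subset_image (f := Prod.snd)
              (Finset.erase_subset q E))
          have h1 : 1 ≤ (E.image Prod.fst).card := Finset.card_pos.mpr ⟨q.1, hL1⟩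
          omega
        | false =>
          have hnot := hb2 rfl
          have hsubR : (E.erase q).image Prod.snd ⊆ (E.image Prod.snd).erase q.2 := by
            intro x hx
            refine Finset.mem_erase.mpr ⟨?_, ?_⟩
            · rintro rfl; exact hnot hx
            · exact Finset.image_subset_image (Finset.erase_subset _ _) hx
          have hR := Finset.card_le_card hsubR
          rw [Finset.card_erase_of_mem hR1] at hR
          have hL := Finset.card_le_card
            (Finset.image_subset_image (f := Prod.fst)
              (Finset.erase_subset q E))
          have h1 : 1 ≤ (E.image Prod.snd).card := Finset.card_pos.mpr ⟨q.2, hR1⟩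
          omega
    by_cases hA : ∃ i', i' ≠ q.1 ∧ (i', q.2) ∈ E
    · -- then q.1 has degree 1
      have hB := hcase hA
      refine hcards true (fun _ => ?_) (fun hf => by cases hf)
      intro hmem
      obtain ⟨r, hr, hr1⟩ := Finset.mem_image.mp hmem
      have hrq : r ≠ q := Finset.ne_of_mem_erase hr
      have hrE : r ∈ E := Finset.mem_of_mem_erase hr
      by_cases h2 : r.2 = q.2
      · exact hrq (Prod.ext hr1 h2)
      · refine hB r.2 h2 ?_
        have : (r.1, r.2) ∈ E := by simpa using hrE
        rwa [hr1] at this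
    · -- then q.2 has degree 1
      push_neg at hA
      refine hcards false (fun hf => by cases hf) (fun _ => ?_)
      intro hmem
      obtain ⟨r, hr, hr2⟩ := Finset.mem_image.mp hmem
      have hrq : r ≠ q := Finset.ne_of_mem_erase hr
      have hrE : r ∈ E := Finset.mem_of_mem_erase hr
      by_cases h1 : r.1 = q.1
      · exact hrq (Prod.ext h1 hr2)
      · refine hA r.1 h1 ?_
        have : (r.1, r.2) ∈ E := by simpa using hrE
        rwa [hr2] at this

/-- Proposition 3.5.  For any spanning tree `T ⊆ [m]×[n]` and any `h`
edges `e 0, …, e (h-1) ∉ T`, the union of the fundamental cycles `C_{T, e ℓ}` has at most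
`2(m + h - 1)` edges. -/
theorem statement3 (m n h : ℕ) (hm : 1 ≤ m) (hn : 1 ≤ n) (hh : 1 ≤ h)
    (T : Finset (Fin m × Fin n)) (hT : IsSpanningTree T)
    (e : Fin h → Fin m × Fin n) (he : ∀ ℓ, e ℓ ∉ T)
    (C : Fin h → Finset (Fin m × Fin n))
    (hC : ∀ ℓ, IsSimpleCycle (C ℓ) ∧ C ℓ ⊆ insert (e ℓ) T ∧ e ℓ ∈ C ℓ) :
    (Finset.univ.biUnion C).card ≤ 2 * (m + h - 1) := by
  classical
  set E := Finset.univ.biUnion C with hE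
  have hCE : ∀ ℓ, C ℓ ⊆ E := fun ℓ x hx => Finset.mem_biUnion.mpr ⟨ℓ, Finset.mem_univ _, hx⟩
  -- each right vertex of E has at least two incident edges in E
  have hfiber : ∀ j ∈ E.image Prod.snd, 2 ≤ (E.filter (fun p => p.2 = j)).card := by
    intro j hj
    obtain ⟨q, hqE, hqj⟩ := Finset.mem_image.mp hj
    obtain ⟨ℓ, -, hqC⟩ := Finset.mem_biUnion.mp hqE
    obtain ⟨k, hk, I, J, hIinj, hJinj, hCeq⟩ := (hC ℓ).1
    rw [hCeq] at hqC
    have hjJ : ∃ ℓ' < k, q.2 = J ℓ' := by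
      rcases Finset.mem_union.mp hqC with hmem | hmem <;>
      · obtain ⟨ℓ', hℓ', heq⟩ := Finset.mem_image.mp hmem
        exact ⟨ℓ', Finset.mem_range.mp hℓ', by rw [← heq]⟩
    obtain ⟨ℓ', hℓ', hj'⟩ := hjJ
    have hidx : (ℓ' + 1) % k < k := Nat.mod_lt _ (by omega)
    have hne' : I ℓ' ≠ I ((ℓ' + 1) % k) := by
      intro hcon
      have := hIinj (Set.mem_Iio.mpr hℓ') (Set.mem_Iio.mpr hidx) hcon
      rcases Nat.lt_or_ge (ℓ' + 1) k with hlt | hge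
      · rw [Nat.mod_eq_of_lt hlt] at this; omega
      · rw [show ℓ' + 1 = k by omega, Nat.mod_self] at this; omega
    have e1 : (I ℓ', J ℓ') ∈ E := hCE ℓ (hCeq ▸ Finset.mem_union_left _
      (Finset.mem_image_of_mem _ (Finset.mem_range.mpr hℓ')))
    have e2 : (I ((ℓ' + 1) % k), J ℓ') ∈ E := hCE ℓ (hCeq ▸ Finset.mem_union_right _
      (Finset.mem_image_of_mem _ (Finset.mem_range.mpr hℓ')))
    have hJj : J ℓ' = j := by rw [← hj']; exact hqj
    refine Finset.one_lt_card.mpr ⟨(I ℓ', J ℓ'), ?_, (I ((ℓ' + 1) % k), J ℓ'), ?_, ?_⟩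
    · exact Finset.mem_filter.mpr ⟨e1, hJj⟩
    · exact Finset.mem_filter.mpr ⟨e2, hJj⟩
    · exact fun hcon => hne' (congrArg Prod.fst hcon)
  have hcount : 2 * (E.image Prod.snd).card ≤ E.card := by
    have hsum := Finset.card_eq_sum_card_fiberwise
      (f := Prod.snd) (s := E) (t := E.image Prod.snd)
      (fun x hx => Finset.mem_image_of_mem _ hx)
    calc 2 * (E.image Prod.snd).card
        = ∑ _j ∈ E.image Prod.snd, 2 := by
          rw [Finset.sum_const, smul_eq_mul, mul_comm]
      _ ≤ ∑ j ∈ E.image Prod.snd, (E.filter (fun p => p.2 = j)).card :=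
          Finset.sum_le_sum hfiber
      _ = E.card := hsum.symm
  -- E ∩ T is a nonempty forest
  have hacyT : IsAcyclicEdges (E ∩ T) :=
    fun Cc hCc => hT.1 Cc (hCc.trans Finset.inter_subset_right)
  have hneT : (E ∩ T).Nonempty := by
    obtain ⟨k, hk, I, J, hIinj, hJinj, hCeq⟩ := (hC ⟨0, hh⟩).1
    have h01 : (1 : ℕ) % k = 1 := Nat.mod_eq_of_lt (by omega)
    have e1 : (I 0, J 0) ∈ C ⟨0, hh⟩ := hCeq ▸ Finset.mem_union_left _
      (Finset.mem_image_of_mem _ (Finset.mem_range.mpr (by omega)))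
    have e2 : (I (1 % k), J 0) ∈ C ⟨0, hh⟩ := hCeq ▸ Finset.mem_union_right _
      (Finset.mem_image_of_mem _ (Finset.mem_range.mpr (by omega)))
    rw [h01] at e2
    have hne01 : (I 0, J 0) ≠ (I 1, J 0) := by
      intro hcon
      have := hIinj (Set.mem_Iio.mpr (by omega : (0 : ℕ) < k))
        (Set.mem_Iio.mpr (by omega : (1 : ℕ) < k)) (congrArg Prod.fst hcon)
      omega
    by_cases h1 : (I 0, J 0) = e ⟨0, hh⟩
    · refine ⟨(I 1, J 0), Finset.mem_inter.mpr ⟨hCE _ e2, ?_⟩⟩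
      rcases Finset.mem_insert.mp ((hC ⟨0, hh⟩).2.1 e2) with hh2 | hh2
      · exact absurd (h1.trans hh2.symm) hne01
      · exact hh2
    · refine ⟨(I 0, J 0), Finset.mem_inter.mpr ⟨hCE _ e1, ?_⟩⟩
      rcases Finset.mem_insert.mp ((hC ⟨0, hh⟩).2.1 e1) with hh2 | hh2
      · exact absurd hh2 h1
      · exact hh2
  have hforest := forest_bound (E ∩ T) hacyT hneT
  have hL := Finset.card_le_card
    (Finset.image_subset_image (f := Prod.fst) (Finset.inter_subset_left : E ∩ T ⊆ E))
  have hR := Finset.card_le_card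
    (Finset.image_subset_image (f := Prod.snd) (Finset.inter_subset_left : E ∩ T ⊆ E))
  have hLm : (E.image Prod.fst).card ≤ m := by
    have := Finset.card_le_univ (E.image Prod.fst)
    simpa using this
  have hEsplit : E.card ≤ (E ∩ T).card + h := by
    have hsub : E ⊆ (E ∩ T) ∪ Finset.image e Finset.univ := by
      intro x hx
      by_cases hxT : x ∈ T
      · exact Finset.mem_union_left _ (Finset.mem_inter.mpr ⟨hx, hxT⟩)
      · obtain ⟨ℓ, -, hxC⟩ := Finset.mem_biUnion.mp hx
        rcases Finset.mem_insert.mp ((hC ℓ).2.1 hxC) with h1 | h1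
        · exact Finset.mem_union_right _
            (Finset.mem_image.mpr ⟨ℓ, Finset.mem_univ _, h1.symm⟩)
        · exact absurd h1 hxT
    calc E.card ≤ ((E ∩ T) ∪ Finset.image e Finset.univ).card := Finset.card_le_card hsub
      _ ≤ (E ∩ T).card + (Finset.image e Finset.univ).card := Finset.card_union_le _ _
      _ ≤ (E ∩ T).card + h := by
          have h1 := Finset.card_image_le (s := (Finset.univ : Finset (Fin h))) (f := e)
          simp at h1
          omega
  omega
end

section
/- Let m ≥ 2, h ≥ 1, let n ≥ 2 be a power of two, and let 2^k be the least power of two strictly greater than m. Let q = 2·(2^k · n)^{m+h−1} (a power of 2, and q ≤ 2·(2mn)^{m+h−1}). Then there exists an MR (m, n, a=1, b=1, h) grid code over F_q, which moreover can be taken to be a Gabidulin construction. -/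
open Finset

namespace St6

variable {m n : ℕ}

theorem exists_cycle (S : Finset (Fin m × Fin n)) (hne : S.Nonempty)
    (hL : ∀ e ∈ S, ∃ e' ∈ S, e'.2 = e.2 ∧ e'.1 ≠ e.1)
    (hR : ∀ e ∈ S, ∃ e' ∈ S, e'.1 = e.1 ∧ e'.2 ≠ e.2) :
    ∃ C ⊆ S, IsSimpleCycle C := by
  classical
  have step : ∀ e ∈ S, ∃ e' ∈ S, e'.1 ≠ e.1 ∧ e'.2 ≠ e.2 ∧ ((e'.1, e.2) ∈ S) := by
    intro e he
    obtain ⟨a, haS, ha2, ha1⟩ := hL e he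
    obtain ⟨b, hbS, hb1, hb2⟩ := hR a haS
    refine ⟨b, hbS, ?_, ?_, ?_⟩
    · rw [hb1]; exact ha1
    · rw [← ha2]; exact hb2
    · have : (b.1, e.2) = a := by
        ext
        · simp [hb1]
        · simp [← ha2]
      rwa [this]
  -- the walk
  let nxt : Fin m × Fin n → Fin m × Fin n := fun e =>
    if he : e ∈ S then Classical.choose (step e he) else e
  let w : ℕ → Fin m × Fin n := fun t => Nat.rec hne.choose (fun _ e => nxt e) t
  have hw0 : w 0 = hne.choose := rfl
  have hwsucc : ∀ t, w (t + 1) = nxt (w t) := fun t => rfl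
  have hnxt : ∀ e (he : e ∈ S), nxt e = Classical.choose (step e he) := by
    intro e he
    simp only [nxt]
    rw [dif_pos he]
  have hwS : ∀ t, w t ∈ S := by
    intro t
    induction t with
    | zero => exact hne.choose_spec
    | succ t ih =>
      rw [hwsucc t, hnxt _ ih]
      exact (Classical.choose_spec (step (w t) ih)).1
  have hwstep : ∀ t, (w (t+1)).1 ≠ (w t).1 ∧ (w (t+1)).2 ≠ (w t).2 ∧
      ((w (t+1)).1, (w t).2) ∈ S := by
    intro t
    have h1 : w (t+1) = Classical.choose (step (w t) (hwS t)) := by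
      rw [hwsucc t, hnxt _ (hwS t)]
    have h2 := (Classical.choose_spec (step (w t) (hwS t))).2
    rw [← h1] at h2
    exact h2
  -- first repetition time
  have hex : ∃ t, 0 < t ∧ ((∃ s < t, (w s).1 = (w t).1) ∨ (∃ s < t, (w s).2 = (w t).2)) := by
    obtain ⟨a, b, hab, heq⟩ := Fintype.exists_ne_map_eq_of_card_lt
      (fun t : Fin (m+1) => (w t).1) (by simp)
    have hne' : (a:ℕ) ≠ (b:ℕ) := fun hh => hab (Fin.ext hh)
    rcases Nat.lt_or_ge (a : ℕ) (b : ℕ) with hlt | hge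
    · exact ⟨b, by omega, Or.inl ⟨a, hlt, heq⟩⟩
    · have hlt : (b:ℕ) < (a:ℕ) := by omega
      exact ⟨a, by omega, Or.inl ⟨b, hlt, heq.symm⟩⟩
  set T := Nat.find hex with hTdef
  have hT := Nat.find_spec hex
  have hmin : ∀ u, u < T → ¬(0 < u ∧ ((∃ s < u, (w s).1 = (w u).1) ∨ (∃ s < u, (w s).2 = (w u).2))) :=
    fun u hu => Nat.find_min hex hu
  have hTpos : 0 < T := hT.1
  have inj_i : ∀ s u, s < u → u < T → (w s).1 ≠ (w u).1 := by
    intro s u hsu huT heq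
    exact hmin u huT ⟨by omega, Or.inl ⟨s, hsu, heq⟩⟩
  have inj_j : ∀ s u, s < u → u < T → (w s).2 ≠ (w u).2 := by
    intro s u hsu huT heq
    exact hmin u huT ⟨by omega, Or.inr ⟨s, hsu, heq⟩⟩
  by_cases hA : ∃ s, s < T ∧ (w s).1 = (w T).1
  · obtain ⟨s, hsT, hsi⟩ := hA
    set k := T - s with hkdef
    have hk2 : 2 ≤ k := by
      rcases Nat.lt_or_ge 1 (T - s) with h | h
      · omega
      · exfalso
        have hTs : T = s + 1 := by omega
        exact (hwstep s).1 (by rw [← hTs, ← hsi])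
    refine ⟨_, ?_, k, hk2, (fun ℓ => (w (s + ℓ)).1), (fun ℓ => (w (s + ℓ)).2), ?_, ?_, rfl⟩
    · intro e he
      rcases Finset.mem_union.1 he with h | h <;>
        obtain ⟨ℓ, hℓ, rfl⟩ := Finset.mem_image.1 h
      · have hℓk : ℓ < k := Finset.mem_range.1 hℓ
        exact (Prod.mk.eta (p := w (s + ℓ))) ▸ hwS (s + ℓ)
      · have hℓk : ℓ < k := Finset.mem_range.1 hℓ
        by_cases hlast : ℓ + 1 < k
        · rw [Nat.mod_eq_of_lt hlast]
          exact (hwstep (s + ℓ)).2.2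
        · have hℓeq : ℓ + 1 = k := by omega
          rw [hℓeq, Nat.mod_self]
          have h2 : s + ℓ + 1 = T := by omega
          show ((w (s + 0)).1, (w (s + ℓ)).2) ∈ S
          rw [Nat.add_zero, hsi, ← h2]
          exact (hwstep (s + ℓ)).2.2
    · intro ℓ1 h1 ℓ2 h2 heq
      simp only [Set.mem_Iio] at h1 h2
      by_contra hne'
      rcases Nat.lt_or_ge ℓ1 ℓ2 with hlt | hge
      · exact inj_i (s + ℓ1) (s + ℓ2) (by omega) (by omega) heq
      · exact inj_i (s + ℓ2) (s + ℓ1) (by omega) (by omega) heq.symm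
    · intro ℓ1 h1 ℓ2 h2 heq
      simp only [Set.mem_Iio] at h1 h2
      by_contra hne'
      rcases Nat.lt_or_ge ℓ1 ℓ2 with hlt | hge
      · exact inj_j (s + ℓ1) (s + ℓ2) (by omega) (by omega) heq
      · exact inj_j (s + ℓ2) (s + ℓ1) (by omega) (by omega) heq.symm
  · have hB : ∃ s, s < T ∧ (w s).2 = (w T).2 := by
      rcases hT.2 with h | h
      · exact absurd (by obtain ⟨s, h1, h2⟩ := h; exact ⟨s, h1, h2⟩) hA
      · obtain ⟨s, h1, h2⟩ := h; exact ⟨s, h1, h2⟩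
    obtain ⟨s, hsT, hsj⟩ := hB
    have inj_i' : ∀ s' u, s' < u → u ≤ T → (w s').1 ≠ (w u).1 := by
      intro s' u hsu huT heq
      rcases Nat.lt_or_ge u T with h | h
      · exact inj_i s' u hsu h heq
      · have : u = T := by omega
        exact hA ⟨s', by omega, by rw [← this]; exact heq⟩
    set k := T - s with hkdef
    have hk2 : 2 ≤ k := by
      rcases Nat.lt_or_ge 1 (T - s) with h | h
      · omega
      · exfalso
        have hTs : T = s + 1 := by omega
        exact (hwstep s).2.1 (by rw [← hTs, ← hsj])
    refine ⟨_, ?_, k, hk2, (fun ℓ => (w (s + 1 + ℓ)).1), (fun ℓ => (w (s + 1 + ℓ)).2), ?_, ?_, rfl⟩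
    · intro e he
      rcases Finset.mem_union.1 he with h | h <;>
        obtain ⟨ℓ, hℓ, rfl⟩ := Finset.mem_image.1 h
      · exact (Prod.mk.eta (p := w (s + 1 + ℓ))) ▸ hwS (s + 1 + ℓ)
      · have hℓk : ℓ < k := Finset.mem_range.1 hℓ
        by_cases hlast : ℓ + 1 < k
        · rw [Nat.mod_eq_of_lt hlast]
          exact (hwstep (s + 1 + ℓ)).2.2
        · have hℓeq : ℓ + 1 = k := by omega
          rw [hℓeq, Nat.mod_self]
          have h2 : s + 1 + ℓ = T := by omega
          show ((w (s + 1 + 0)).1, (w (s + 1 + ℓ)).2) ∈ S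
          rw [Nat.add_zero, h2, ← hsj]
          exact (hwstep s).2.2
    · intro ℓ1 h1 ℓ2 h2 heq
      simp only [Set.mem_Iio] at h1 h2
      by_contra hne'
      rcases Nat.lt_or_ge ℓ1 ℓ2 with hlt | hge
      · exact inj_i' (s + 1 + ℓ1) (s + 1 + ℓ2) (by omega) (by omega) heq
      · exact inj_i' (s + 1 + ℓ2) (s + 1 + ℓ1) (by omega) (by omega) heq.symm
    · intro ℓ1 h1 ℓ2 h2 heq
      simp only [Set.mem_Iio] at h1 h2
      -- indices u := s + 1 + ℓ; if uᵢ = T replace value by (w s).2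
      by_contra hne'
      have key : ∀ u1 u2, u1 < u2 → u2 ≤ T → s < u1 → (w u1).2 ≠ (w u2).2 := by
        intro u1 u2 h12 h2T hsu1 heq'
        rcases Nat.lt_or_ge u2 T with h | h
        · exact inj_j u1 u2 h12 h heq'
        · have hu2 : u2 = T := by omega
          rw [hu2, ← hsj] at heq'
          exact inj_j s u1 hsu1 (by omega) heq'.symm
      rcases Nat.lt_or_ge ℓ1 ℓ2 with hlt | hge
      · exact key (s + 1 + ℓ1) (s + 1 + ℓ2) (by omega) (by omega) (by omega) heq
      · exact key (s + 1 + ℓ2) (s + 1 + ℓ1) (by omega) (by omega) (by omega) heq.symm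


variable {F : Type*} [Field F]

def IsFlow (y : Fin m × Fin n → F) : Prop :=
  (∀ i, ∑ j, y (i, j) = 0) ∧ (∀ j, ∑ i, y (i, j) = 0)

noncomputable def suppF (y : Fin m × Fin n → F) : Finset (Fin m × Fin n) :=
  @Finset.filter _ (fun e => y e ≠ 0) (Classical.decPred _) Finset.univ

lemma mem_suppF {y : Fin m × Fin n → F} {e} : e ∈ suppF y ↔ y e ≠ 0 := by
  classical
  simp [suppF]

def chi (C : Finset (Fin m × Fin n)) : Fin m × Fin n → F := fun e => if e ∈ C then 1 else 0

lemma chi_apply_mem {C : Finset (Fin m × Fin n)} {e} (he : e ∈ C) : (chi C e : F) = 1 := by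
  simp [chi, he]

lemma chi_eq_zero_of_not_mem {C : Finset (Fin m × Fin n)} {e} (he : e ∉ C) : (chi C e : F) = 0 := by
  simp [chi, he]

lemma succ_mod_lt {k ℓ : ℕ} (hk : 0 < k) : (ℓ + 1) % k < k := Nat.mod_lt _ hk

lemma succ_mod_ne {k ℓ : ℕ} (hk : 2 ≤ k) (hℓ : ℓ < k) : (ℓ + 1) % k ≠ ℓ := by
  rcases Nat.lt_or_ge (ℓ + 1) k with h | h
  · rw [Nat.mod_eq_of_lt h]; omega
  · have : ℓ + 1 = k := by omega
    rw [this, Nat.mod_self]; omega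

lemma succ_mod_inj {k ℓ ℓ' : ℕ} (h1 : ℓ < k) (h2 : ℓ' < k)
    (h : (ℓ + 1) % k = (ℓ' + 1) % k) : ℓ = ℓ' := by
  rcases Nat.lt_or_ge (ℓ + 1) k with ha | ha <;> rcases Nat.lt_or_ge (ℓ' + 1) k with hb | hb
  · rw [Nat.mod_eq_of_lt ha, Nat.mod_eq_of_lt hb] at h; omega
  · have hb' : ℓ' + 1 = k := by omega
    rw [Nat.mod_eq_of_lt ha, hb', Nat.mod_self] at h; omega
  · have ha' : ℓ + 1 = k := by omega
    rw [ha', Nat.mod_self, Nat.mod_eq_of_lt hb] at h; omega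
  · omega

lemma pred_mod {k ℓ0 : ℕ} (hk : 2 ≤ k) (h : ℓ0 < k) :
    (if ℓ0 = 0 then k - 1 else ℓ0 - 1) < k ∧
    ((if ℓ0 = 0 then k - 1 else ℓ0 - 1) + 1) % k = ℓ0 := by
  by_cases h0 : ℓ0 = 0
  · simp only [h0, if_pos]
    constructor
    · omega
    · have : k - 1 + 1 = k := by omega
      rw [this, Nat.mod_self]
  · rw [if_neg h0]
    constructor
    · omega
    · have : ℓ0 - 1 + 1 = ℓ0 := by omega
      rw [this, Nat.mod_eq_of_lt h]

theorem chi_isFlow (h2 : (2 : F) = 0) {C : Finset (Fin m × Fin n)} (hC : IsSimpleCycle C) :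
    IsFlow (chi C : Fin m × Fin n → F) := by
  classical
  obtain ⟨k, hk2, I, J, hI, hJ, rfl⟩ := hC
  have hk0 : 0 < k := by omega
  set C := ((Finset.range k).image fun ℓ => (I ℓ, J ℓ)) ∪
      ((Finset.range k).image fun ℓ => (I ((ℓ + 1) % k), J ℓ)) with hCdef
  have memC : ∀ e, e ∈ C ↔ (∃ ℓ, ℓ < k ∧ e = (I ℓ, J ℓ)) ∨
      (∃ ℓ, ℓ < k ∧ e = (I ((ℓ + 1) % k), J ℓ)) := by
    intro e
    simp only [hCdef, Finset.mem_union, Finset.mem_image, Finset.mem_range]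
    constructor
    · rintro (⟨ℓ, hℓ, rfl⟩ | ⟨ℓ, hℓ, rfl⟩)
      · exact Or.inl ⟨ℓ, hℓ, rfl⟩
      · exact Or.inr ⟨ℓ, hℓ, rfl⟩
    · rintro (⟨ℓ, hℓ, rfl⟩ | ⟨ℓ, hℓ, rfl⟩)
      · exact Or.inl ⟨ℓ, hℓ, rfl⟩
      · exact Or.inr ⟨ℓ, hℓ, rfl⟩
  constructor
  · intro i
    have hsum : (∑ j, (chi C (i, j) : F)) = ((Finset.univ.filter fun j => (i, j) ∈ C).card : F) := by
      rw [← Finset.sum_boole]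
      rfl
    rw [hsum]
    by_cases hi : ∃ ℓ, ℓ < k ∧ I ℓ = i
    · obtain ⟨ℓ0, hℓ0, rfl⟩ := hi
      obtain ⟨hℓ1lt, hℓ1succ⟩ := pred_mod hk2 hℓ0
      set ℓ1 := if ℓ0 = 0 then k - 1 else ℓ0 - 1 with hℓ1def
      have hne01 : ℓ0 ≠ ℓ1 := by
        intro h
        exact succ_mod_ne hk2 hℓ0 (by rw [← h] at hℓ1succ; exact hℓ1succ)
      have hfilter : (Finset.univ.filter fun j => (I ℓ0, j) ∈ C) = {J ℓ0, J ℓ1} := by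
        ext j
        simp only [Finset.mem_filter, Finset.mem_univ, true_and, Finset.mem_insert,
          Finset.mem_singleton]
        constructor
        · intro hj
          rcases (memC _).1 hj with ⟨ℓ, hℓ, heq⟩ | ⟨ℓ, hℓ, heq⟩
          · have h1 : I ℓ0 = I ℓ := congrArg Prod.fst heq
            have : ℓ0 = ℓ := hI hℓ0 hℓ h1
            subst this
            exact Or.inl (congrArg Prod.snd heq)
          · have h1 : I ℓ0 = I ((ℓ + 1) % k) := congrArg Prod.fst heq
            have h3 : ℓ0 = (ℓ + 1) % k := hI hℓ0 (succ_mod_lt hk0) h1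
            have : ℓ = ℓ1 := succ_mod_inj hℓ hℓ1lt (by rw [← h3, hℓ1succ])
            subst this
            exact Or.inr (congrArg Prod.snd heq)
        · rintro (rfl | rfl)
          · exact (memC _).2 (Or.inl ⟨ℓ0, hℓ0, rfl⟩)
          · exact (memC _).2 (Or.inr ⟨ℓ1, hℓ1lt, by rw [hℓ1succ]⟩)
      rw [hfilter]
      have hJne : J ℓ0 ≠ J ℓ1 := fun h => hne01 (hJ hℓ0 hℓ1lt h)
      rw [Finset.card_insert_of_notMem (by simpa using hJne), Finset.card_singleton]
      push_cast
      exact h2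
    · have hfilter : (Finset.univ.filter fun j => (i, j) ∈ C) = ∅ := by
        ext j
        simp only [Finset.mem_filter, Finset.mem_univ, true_and, Finset.notMem_empty,
          iff_false]
        intro hj
        rcases (memC _).1 hj with ⟨ℓ, hℓ, heq⟩ | ⟨ℓ, hℓ, heq⟩
        · exact hi ⟨ℓ, hℓ, (congrArg Prod.fst heq).symm⟩
        · exact hi ⟨(ℓ + 1) % k, succ_mod_lt hk0, (congrArg Prod.fst heq).symm⟩
      rw [hfilter]
      simp
  · intro j
    have hsum : (∑ i, (chi C (i, j) : F)) = ((Finset.univ.filter fun i => (i, j) ∈ C).card : F) := by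
      rw [← Finset.sum_boole]
      rfl
    rw [hsum]
    by_cases hj : ∃ ℓ, ℓ < k ∧ J ℓ = j
    · obtain ⟨ℓ0, hℓ0, rfl⟩ := hj
      have hfilter : (Finset.univ.filter fun i => (i, J ℓ0) ∈ C) = {I ℓ0, I ((ℓ0 + 1) % k)} := by
        ext i
        simp only [Finset.mem_filter, Finset.mem_univ, true_and, Finset.mem_insert,
          Finset.mem_singleton]
        constructor
        · intro hi
          rcases (memC _).1 hi with ⟨ℓ, hℓ, heq⟩ | ⟨ℓ, hℓ, heq⟩
          · have h1 : J ℓ0 = J ℓ := congrArg Prod.snd heq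
            have : ℓ0 = ℓ := hJ hℓ0 hℓ h1
            subst this
            exact Or.inl (congrArg Prod.fst heq)
          · have h1 : J ℓ0 = J ℓ := congrArg Prod.snd heq
            have : ℓ0 = ℓ := hJ hℓ0 hℓ h1
            subst this
            exact Or.inr (congrArg Prod.fst heq)
        · rintro (rfl | rfl)
          · exact (memC _).2 (Or.inl ⟨ℓ0, hℓ0, rfl⟩)
          · exact (memC _).2 (Or.inr ⟨ℓ0, hℓ0, rfl⟩)
      rw [hfilter]
      have hIne : I ℓ0 ≠ I ((ℓ0 + 1) % k) := fun h =>
        (succ_mod_ne hk2 hℓ0) (hI (succ_mod_lt hk0) hℓ0 h.symm)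
      rw [Finset.card_insert_of_notMem (by simpa using hIne), Finset.card_singleton]
      push_cast
      exact h2
    · have hfilter : (Finset.univ.filter fun i => (i, j) ∈ C) = ∅ := by
        ext i
        simp only [Finset.mem_filter, Finset.mem_univ, true_and, Finset.notMem_empty,
          iff_false]
        intro hi
        rcases (memC _).1 hi with ⟨ℓ, hℓ, heq⟩ | ⟨ℓ, hℓ, heq⟩
        · exact hj ⟨ℓ, hℓ, (congrArg Prod.snd heq).symm⟩
        · exact hj ⟨ℓ, hℓ, (congrArg Prod.snd heq).symm⟩
      rw [hfilter]
      simp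

lemma exists_other {α : Type*} [Fintype α] (f : α → F) (h : ∑ a, f a = 0) (a0 : α)
    (ha : f a0 ≠ 0) : ∃ a, f a ≠ 0 ∧ a ≠ a0 := by
  classical
  by_contra h'
  push_neg at h'
  have : ∑ a, f a = f a0 := by
    refine Finset.sum_eq_single a0 (fun b _ hb => ?_) (fun h'' => absurd (Finset.mem_univ a0) h'')
    by_contra hfb
    exact hb (h' b hfb)
  rw [this] at h
  exact ha h

lemma flow_support_partners {y : Fin m × Fin n → F} (hy : IsFlow y) :
    (∀ e ∈ suppF y, ∃ e' ∈ suppF y, e'.2 = e.2 ∧ e'.1 ≠ e.1) ∧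
    (∀ e ∈ suppF y, ∃ e' ∈ suppF y, e'.1 = e.1 ∧ e'.2 ≠ e.2) := by
  constructor
  · intro e he
    have hcol := hy.2 e.2
    obtain ⟨i', hi', hne⟩ := exists_other (fun i => y (i, e.2)) hcol e.1
      (by simpa using mem_suppF.1 he)
    exact ⟨(i', e.2), mem_suppF.2 hi', rfl, hne⟩
  · intro e he
    have hrow := hy.1 e.1
    obtain ⟨j', hj', hne⟩ := exists_other (fun j => y (e.1, j)) hrow e.2
      (by simpa using mem_suppF.1 he)
    exact ⟨(e.1, j'), mem_suppF.2 hj', rfl, hne⟩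

lemma flow_support_cycle {y : Fin m × Fin n → F} (hy : IsFlow y) (hne : y ≠ 0) :
    ∃ C ⊆ suppF y, IsSimpleCycle C := by
  obtain ⟨e0, he0⟩ : ∃ e, y e ≠ 0 := by
    by_contra h
    push_neg at h
    exact hne (funext h)
  obtain ⟨hL, hR⟩ := flow_support_partners hy
  exact exists_cycle _ ⟨e0, mem_suppF.2 he0⟩ hL hR

lemma cycle_nonempty {C : Finset (Fin m × Fin n)} (hC : IsSimpleCycle C) : C.Nonempty := by
  obtain ⟨k, hk2, I, J, _, _, rfl⟩ := hC
  exact ⟨(I 0, J 0), Finset.mem_union_left _ (Finset.mem_image.2 ⟨0, Finset.mem_range.2 (by omega), rfl⟩)⟩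

theorem flow_mem_span (h2 : (2 : F) = 0) (E : Finset (Fin m × Fin n)) :
    ∀ y : Fin m × Fin n → F, IsFlow y → (∀ e, y e ≠ 0 → e ∈ E) →
    y ∈ Submodule.span F {x : Fin m × Fin n → F | ∃ C, C ⊆ E ∧ IsSimpleCycle C ∧ x = chi C} := by
  classical
  suffices H : ∀ N, ∀ y : Fin m × Fin n → F, IsFlow y → (∀ e, y e ≠ 0 → e ∈ E) →
      (suppF y).card = N →
      y ∈ Submodule.span F {x : Fin m × Fin n → F | ∃ C, C ⊆ E ∧ IsSimpleCycle C ∧ x = chi C} by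
    intro y hy hs
    exact H _ y hy hs rfl
  intro N
  induction N using Nat.strong_induction_on with
  | _ N ih =>
    intro y hy hsupp hcard
    by_cases h0 : y = 0
    · rw [h0]
      exact Submodule.zero_mem _
    · obtain ⟨C, hCsub, hCcyc⟩ := flow_support_cycle hy h0
      obtain ⟨e0, he0C⟩ := cycle_nonempty hCcyc
      have he0y : y e0 ≠ 0 := mem_suppF.1 (hCsub he0C)
      set y' : Fin m × Fin n → F := y - y e0 • chi C with hy'def
      have hy'flow : IsFlow y' := by
        constructor
        · intro i
          have := (chi_isFlow h2 hCcyc).1 i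
          simp only [hy'def, Pi.sub_apply, Pi.smul_apply, smul_eq_mul]
          rw [Finset.sum_sub_distrib, hy.1 i, ← Finset.mul_sum, this, mul_zero, sub_zero]
        · intro j
          have := (chi_isFlow h2 hCcyc).2 j
          simp only [hy'def, Pi.sub_apply, Pi.smul_apply, smul_eq_mul]
          rw [Finset.sum_sub_distrib, hy.2 j, ← Finset.mul_sum, this, mul_zero, sub_zero]
      have hy'supp : suppF y' ⊆ (suppF y).erase e0 := by
        intro e he
        have hne := mem_suppF.1 he
        rw [Finset.mem_erase]
        constructor
        · rintro rfl
          apply hne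
          simp [hy'def, chi_apply_mem he0C]
        · rw [mem_suppF]
          intro hz
          apply hne
          by_cases heC : e ∈ C
          · exact absurd (mem_suppF.1 (hCsub heC)) (not_not.2 hz)
          · simp [hy'def, hz, chi_eq_zero_of_not_mem heC]
      have hy'suppE : ∀ e, y' e ≠ 0 → e ∈ E := by
        intro e he
        exact hsupp e (mem_suppF.1 (Finset.mem_erase.1 (hy'supp (mem_suppF.2 he))).2)
      have hcard' : (suppF y').card < N := by
        rw [← hcard]
        calc (suppF y').card ≤ ((suppF y).erase e0).card := Finset.card_le_card hy'supp
          _ < (suppF y).card := Finset.card_erase_lt_of_mem (hCsub he0C)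
      have hy'span := ih _ hcard' y' hy'flow hy'suppE rfl
      have hCspan : (chi C : Fin m × Fin n → F) ∈
          {x : Fin m × Fin n → F | ∃ C, C ⊆ E ∧ IsSimpleCycle C ∧ x = chi C} :=
        ⟨C, fun e he => hsupp e (mem_suppF.1 (hCsub he)), hCcyc, rfl⟩
      have : y = y' + y e0 • chi C := by
        funext e
        simp [hy'def]
      rw [this]
      exact Submodule.add_mem _ hy'span
        (Submodule.smul_mem _ _ (Submodule.subset_span hCspan))

def IsAcyclicEdges' (E : Finset (Fin m × Fin n)) : Prop :=
  ∀ C ⊆ E, ¬ IsSimpleCycle C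

theorem acyclic_card_bound :
    ∀ N (T : Finset (Fin m × Fin n)), T.card = N → (∀ C ⊆ T, ¬ IsSimpleCycle C) → T.Nonempty →
    T.card + 1 ≤ (T.image Prod.fst).card + (T.image Prod.snd).card := by
  classical
  intro N
  induction N using Nat.strong_induction_on with
  | _ N ih =>
    intro T hcard hac hne
    by_cases HL : ∀ e ∈ T, ∃ e' ∈ T, e'.2 = e.2 ∧ e'.1 ≠ e.1
    · by_cases HR : ∀ e ∈ T, ∃ e' ∈ T, e'.1 = e.1 ∧ e'.2 ≠ e.2
      · obtain ⟨C, hCsub, hCcyc⟩ := exists_cycle T hne HL HR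
        exact absurd hCcyc (hac C hCsub)
      · -- some left vertex has degree one
        push_neg at HR
        obtain ⟨e, heT, hdeg⟩ := HR
        have huniq : ∀ e' ∈ T, e'.1 = e.1 → e' = e := by
          intro e' he' h1
          exact Prod.ext h1 (hdeg e' he' h1)
        set T' := T.erase e with hT'def
        by_cases hT' : T' = ∅
        · have hTsub : T ⊆ {e} := by
            intro x hx
            rcases eq_or_ne x e with h | h
            · simp [h]
            · exfalso
              have hmem : x ∈ T' := Finset.mem_erase.2 ⟨h, hx⟩
              rw [hT'] at hmem
              exact Finset.notMem_empty x hmem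
          have h1 : T.card = 1 := le_antisymm (by simpa using Finset.card_le_card hTsub)
            (Finset.card_pos.2 hne)
          have h2 : 1 ≤ (T.image Prod.fst).card := Finset.card_pos.2 (hne.image _)
          have h3 : 1 ≤ (T.image Prod.snd).card := Finset.card_pos.2 (hne.image _)
          omega
        · have hT'ne : T'.Nonempty := Finset.nonempty_of_ne_empty hT'
          have hT'card : T'.card = T.card - 1 := Finset.card_erase_of_mem heT
          have hT'lt : T'.card < N := by
            have : 0 < T.card := Finset.card_pos.2 hne
            omega
          have hT'ac : ∀ C ⊆ T', ¬ IsSimpleCycle C :=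
            fun C hC => hac C (hC.trans (Finset.erase_subset _ _))
          have hIH := ih _ hT'lt T' rfl hT'ac hT'ne
          have himfst : T'.image Prod.fst ⊆ (T.image Prod.fst).erase e.1 := by
            intro x hx
            obtain ⟨e', he', rfl⟩ := Finset.mem_image.1 hx
            obtain ⟨hne', he'T⟩ := Finset.mem_erase.1 he'
            refine Finset.mem_erase.2 ⟨?_, Finset.mem_image_of_mem _ he'T⟩
            intro h1
            exact hne' (huniq e' he'T h1)
          have h1 : (T'.image Prod.fst).card ≤ (T.image Prod.fst).card - 1 := by
            calc (T'.image Prod.fst).card ≤ ((T.image Prod.fst).erase e.1).card :=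
              Finset.card_le_card himfst
              _ = (T.image Prod.fst).card - 1 :=
                Finset.card_erase_of_mem (Finset.mem_image_of_mem _ heT)
          have h2 : (T'.image Prod.snd).card ≤ (T.image Prod.snd).card :=
            Finset.card_le_card (Finset.image_subset_image (Finset.erase_subset _ _))
          have h3 : 1 ≤ (T.image Prod.fst).card := Finset.card_pos.2 (hne.image _)
          have h4 : 0 < T.card := Finset.card_pos.2 hne
          omega
    · push_neg at HL
      obtain ⟨e, heT, hdeg⟩ := HL
      have huniq : ∀ e' ∈ T, e'.2 = e.2 → e' = e := by
        intro e' he' h1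
        exact Prod.ext (hdeg e' he' h1) h1
      set T' := T.erase e with hT'def
      by_cases hT' : T' = ∅
      · have hTsub : T ⊆ {e} := by
          intro x hx
          rcases eq_or_ne x e with h | h
          · simp [h]
          · exfalso
            have hmem : x ∈ T' := Finset.mem_erase.2 ⟨h, hx⟩
            rw [hT'] at hmem
            exact Finset.notMem_empty x hmem
        have h1 : T.card = 1 := le_antisymm (by simpa using Finset.card_le_card hTsub)
          (Finset.card_pos.2 hne)
        have h2 : 1 ≤ (T.image Prod.fst).card := Finset.card_pos.2 (hne.image _)
        have h3 : 1 ≤ (T.image Prod.snd).card := Finset.card_pos.2 (hne.image _)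
        omega
      · have hT'ne : T'.Nonempty := Finset.nonempty_of_ne_empty hT'
        have hT'card : T'.card = T.card - 1 := Finset.card_erase_of_mem heT
        have hT'lt : T'.card < N := by
          have : 0 < T.card := Finset.card_pos.2 hne
          omega
        have hT'ac : ∀ C ⊆ T', ¬ IsSimpleCycle C :=
          fun C hC => hac C (hC.trans (Finset.erase_subset _ _))
        have hIH := ih _ hT'lt T' rfl hT'ac hT'ne
        have himsnd : T'.image Prod.snd ⊆ (T.image Prod.snd).erase e.2 := by
          intro x hx
          obtain ⟨e', he', rfl⟩ := Finset.mem_image.1 hx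
          obtain ⟨hne', he'T⟩ := Finset.mem_erase.1 he'
          refine Finset.mem_erase.2 ⟨?_, Finset.mem_image_of_mem _ he'T⟩
          intro h1
          exact hne' (huniq e' he'T h1)
        have h1 : (T'.image Prod.snd).card ≤ (T.image Prod.snd).card - 1 := by
          calc (T'.image Prod.snd).card ≤ ((T.image Prod.snd).erase e.2).card :=
            Finset.card_le_card himsnd
            _ = (T.image Prod.snd).card - 1 :=
              Finset.card_erase_of_mem (Finset.mem_image_of_mem _ heT)
        have h2 : (T'.image Prod.fst).card ≤ (T.image Prod.fst).card :=
          Finset.card_le_card (Finset.image_subset_image (Finset.erase_subset _ _))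
        have h3 : 1 ≤ (T.image Prod.snd).card := Finset.card_pos.2 (hne.image _)
        have h4 : 0 < T.card := Finset.card_pos.2 hne
        omega

theorem evenD_card_bound {h : ℕ} (hm : 1 ≤ m) (hh : 1 ≤ h)
    (D E' F' : Finset (Fin m × Fin n))
    (hDE : D ⊆ E' ∪ F') (hac : ∀ C ⊆ E', ¬ IsSimpleCycle C) (hF : F'.card ≤ h)
    (hdeg : ∀ j ∈ D.image Prod.snd, 2 ≤ (D.filter (fun e => e.2 = j)).card) :
    D.card + 2 ≤ 2 * m + 2 * h := by
  classical
  set T := D ∩ E' with hTdef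
  have hsplit : D.card ≤ T.card + h := by
    have hsub : D ⊆ T ∪ F' := by
      intro e he
      rcases Finset.mem_union.1 (hDE he) with h1 | h1
      · exact Finset.mem_union_left _ (Finset.mem_inter.2 ⟨he, h1⟩)
      · exact Finset.mem_union_right _ h1
    calc D.card ≤ (T ∪ F').card := Finset.card_le_card hsub
      _ ≤ T.card + F'.card := Finset.card_union_le _ _
      _ ≤ T.card + h := by omega
  have hrdeg : 2 * (D.image Prod.snd).card ≤ D.card := by
    have hfib : D.card = ∑ j ∈ D.image Prod.snd, (D.filter (fun e => e.2 = j)).card :=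
      Finset.card_eq_sum_card_fiberwise (fun x hx => Finset.mem_image_of_mem _ hx)
    calc 2 * (D.image Prod.snd).card = ∑ _j ∈ D.image Prod.snd, 2 := by
          rw [Finset.sum_const, smul_eq_mul]; ring
      _ ≤ ∑ j ∈ D.image Prod.snd, (D.filter (fun e => e.2 = j)).card :=
          Finset.sum_le_sum hdeg
      _ = D.card := hfib.symm
  have hl : (D.image Prod.fst).card ≤ m := by
    calc (D.image Prod.fst).card ≤ (Finset.univ : Finset (Fin m)).card := Finset.card_le_univ _
      _ = m := by simp
  by_cases hTne : T.Nonempty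
  · have hTac : ∀ C ⊆ T, ¬ IsSimpleCycle C :=
      fun C hC => hac C (hC.trans Finset.inter_subset_right)
    have hTbound := acyclic_card_bound T.card T rfl hTac hTne
    have h1 : (T.image Prod.fst).card ≤ (D.image Prod.fst).card :=
      Finset.card_le_card (Finset.image_subset_image Finset.inter_subset_left)
    have h2 : (T.image Prod.snd).card ≤ (D.image Prod.snd).card :=
      Finset.card_le_card (Finset.image_subset_image Finset.inter_subset_left)
    omega
  · have hTempty : T = ∅ := Finset.not_nonempty_iff_eq_empty.1 hTne
    have : D ⊆ F' := by
      intro e he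
      rcases Finset.mem_union.1 (hDE he) with h1 | h1
      · exfalso
        have : e ∈ T := Finset.mem_inter.2 ⟨he, h1⟩
        rw [hTempty] at this
        exact Finset.notMem_empty e this
      · exact h1
    have := Finset.card_le_card this
    omega


theorem bch_vanish {K : Type*} [Field K] [CharP K 2] (r : ℕ) (S : Finset K)
    (hcard : S.card ≤ 2 * r) (heven : 2 ∣ S.card)
    (hps : ∀ s, s < r → ∑ x ∈ S, x ^ (2 * s + 1) = 0) : S = ∅ := by
  classical
  have hp : ∀ j, j < 2 * r → ∑ x ∈ S, x ^ j = 0 := by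
    intro j
    induction j using Nat.strong_induction_on with
    | _ j ih =>
      intro hj
      rcases Nat.even_or_odd j with he | ho
      · obtain ⟨j', rfl⟩ := he
        by_cases hj0 : j' = 0
        · subst hj0
          simp only [Nat.add_zero, pow_zero, Finset.sum_const, nsmul_eq_mul, mul_one]
          exact (CharP.cast_eq_zero_iff K 2 S.card).2 heven
        · have hj'lt : j' < 2 * r := by omega
          have hzero := ih j' (by omega) hj'lt
          have h2 : ∀ x : K, x ^ (j' + j') = (x ^ j') ^ 2 := by
            intro x
            rw [← pow_mul]
            ring_nf
          calc ∑ x ∈ S, x ^ (j' + j') = ∑ x ∈ S, (x ^ j') ^ 2 := by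
                exact Finset.sum_congr rfl fun x _ => h2 x
            _ = (∑ x ∈ S, x ^ j') ^ 2 := (sum_pow_char 2 S _).symm
            _ = 0 := by rw [hzero]; ring
      · obtain ⟨s, rfl⟩ := ho
        exact hps s (by omega)
  by_contra hSne
  have hne : S.Nonempty := Finset.nonempty_of_ne_empty hSne
  set c := S.card with hc
  have hc0 : 0 < c := Finset.card_pos.2 hne
  let x : Fin c → K := fun a => (S.equivFin.symm a : K)
  have hxinj : Function.Injective x := by
    intro a b hab
    apply S.equivFin.symm.injective
    exact Subtype.ext hab
  have hxsum : ∀ j : ℕ, ∑ a : Fin c, x a ^ j = ∑ v ∈ S, v ^ j := by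
    intro j
    have h1 := Equiv.sum_comp S.equivFin.symm (fun v : {y // y ∈ S} => (v : K) ^ j)
    have h2 := Finset.sum_coe_sort S (fun v => v ^ j)
    exact h1.trans h2
  have hdet : (Matrix.vandermonde x).det ≠ 0 := by
    rw [Matrix.det_vandermonde]
    refine Finset.prod_ne_zero_iff.2 fun i _ => Finset.prod_ne_zero_iff.2 fun j hj => ?_
    have : i ≠ j := fun h => by
      rw [h] at hj
      exact absurd (Finset.mem_Ioi.1 hj) (lt_irrefl _)
    exact sub_ne_zero.2 fun h => this (hxinj h.symm)
  have hunit : IsUnit (Matrix.vandermonde x) :=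
    (Matrix.isUnit_iff_isUnit_det _).2 hdet.isUnit
  have hker : (fun _ => (1 : K)) = (0 : Fin c → K) := by
    apply (Matrix.vecMul_injective_iff_isUnit.2 hunit)
    show Matrix.vecMul (fun _ => (1 : K)) (Matrix.vandermonde x) =
      Matrix.vecMul (0 : Fin c → K) (Matrix.vandermonde x)
    rw [Matrix.zero_vecMul]
    funext j
    simp only [Matrix.vecMul, dotProduct, Matrix.vandermonde, one_mul]
    have : ∑ i, x i ^ (j : ℕ) = 0 := by
      rw [hxsum]
      exact hp _ (by have := j.isLt; omega)
    simpa using this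
  have := congrFun hker ⟨0, hc0⟩
  simpa using this

theorem moore_kill {K : Type*} [Field K] [CharP K 2] {r h : ℕ} (hr : r ≤ h)
    (β : Fin r → K)
    (hind : ∀ s : Finset (Fin r), s.Nonempty → ∑ v ∈ s, β v ≠ 0)
    (α : Fin r → K) (heq : ∀ l, l < h → ∑ v, α v * β v ^ 2 ^ l = 0) : α = 0 := by
  classical
  rcases Nat.eq_zero_or_pos r with hr0 | hr0
  · subst hr0
    funext l
    exact absurd l.isLt (by omega)
  set M : Matrix (Fin r) (Fin r) K := Matrix.of fun l v => β v ^ 2 ^ (l : ℕ) with hM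
  have hrows : LinearIndependent K (fun l => M l) := by
    rw [Fintype.linearIndependent_iff]
    intro g hg
    by_contra hgne
    push_neg at hgne
    obtain ⟨l0, hl0⟩ := hgne
    have hgv : ∀ v : Fin r, ∑ l : Fin r, g l * β v ^ 2 ^ (l : ℕ) = 0 := by
      intro v
      have := congrFun hg v
      simpa [M, Finset.sum_apply] using this
    set P : Polynomial K := ∑ l : Fin r, Polynomial.C (g l) * Polynomial.X ^ (2 ^ (l : ℕ)) with hP
    have hPne : P ≠ 0 := by
      intro h0
      apply hl0
      have hcoeff := congrArg (fun q => Polynomial.coeff q (2 ^ (l0 : ℕ))) h0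
      simp only [hP, Polynomial.finset_sum_coeff, Polynomial.coeff_C_mul,
        Polynomial.coeff_X_pow, Polynomial.coeff_zero] at hcoeff
      rw [Finset.sum_eq_single l0] at hcoeff
      · simpa using hcoeff
      · intro b _ hb
        have hne2 : (2 : ℕ) ^ (l0 : ℕ) ≠ 2 ^ (b : ℕ) := by
          intro hpow
          exact hb (Fin.ext (Nat.pow_right_injective (le_refl 2) hpow)).symm
        simp [hne2]
      · intro hl0'
        exact absurd (Finset.mem_univ l0) hl0'
    have hdeg : P.natDegree ≤ 2 ^ (r - 1) := by
      apply Polynomial.natDegree_sum_le_of_forall_le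
      intro l _
      calc (Polynomial.C (g l) * Polynomial.X ^ (2 ^ (l : ℕ))).natDegree
          ≤ (Polynomial.X ^ (2 ^ (l : ℕ)) : Polynomial K).natDegree :=
            Polynomial.natDegree_C_mul_le _ _
        _ = 2 ^ (l : ℕ) := Polynomial.natDegree_X_pow _
        _ ≤ 2 ^ (r - 1) := Nat.pow_le_pow_right (by norm_num) (by have := l.isLt; omega)
    have hroot : ∀ t : Finset (Fin r), P.IsRoot (∑ v ∈ t, β v) := by
      intro t
      have heval : P.eval (∑ v ∈ t, β v) = ∑ l : Fin r, g l * (∑ v ∈ t, β v) ^ 2 ^ (l : ℕ) := by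
        simp [hP, Polynomial.eval_finset_sum]
      rw [Polynomial.IsRoot, heval]
      have h2 : ∀ l : Fin r, (∑ v ∈ t, β v) ^ 2 ^ (l : ℕ) = ∑ v ∈ t, β v ^ 2 ^ (l : ℕ) :=
        fun l => sum_pow_char_pow 2 _ t β
      calc ∑ l : Fin r, g l * (∑ v ∈ t, β v) ^ 2 ^ (l : ℕ)
          = ∑ l : Fin r, ∑ v ∈ t, g l * β v ^ 2 ^ (l : ℕ) := by
            refine Finset.sum_congr rfl fun l _ => ?_
            rw [h2 l, Finset.mul_sum]
        _ = ∑ v ∈ t, ∑ l : Fin r, g l * β v ^ 2 ^ (l : ℕ) := Finset.sum_comm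
        _ = 0 := by
            rw [Finset.sum_eq_zero]
            intro v _
            exact hgv v
    have hzinj : ∀ t t' : Finset (Fin r), (∑ v ∈ t, β v) = (∑ v ∈ t', β v) → t = t' := by
      intro t t' hEq
      by_contra hne
      have hsd : ((t \ t') ∪ (t' \ t)).Nonempty := by
        by_contra hcon
        rw [Finset.not_nonempty_iff_eq_empty, Finset.union_eq_empty] at hcon
        exact hne (Finset.Subset.antisymm
          ((Finset.sdiff_eq_empty_iff_subset).1 hcon.1)
          ((Finset.sdiff_eq_empty_iff_subset).1 hcon.2))
      have key : ∑ v ∈ t \ t', β v = ∑ v ∈ t' \ t, β v := by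
        have h1 := Finset.sum_inter_add_sum_sdiff t t' β
        have h2 := Finset.sum_inter_add_sum_sdiff t' t β
        rw [Finset.inter_comm] at h2
        apply add_left_cancel (a := ∑ v ∈ t ∩ t', β v)
        rw [h1, h2, hEq]
      have hsum : ∑ v ∈ (t \ t') ∪ (t' \ t), β v = 0 := by
        rw [Finset.sum_union disjoint_sdiff_sdiff, key, ← two_mul,
          show ((2 : K)) = ((2 : ℕ) : K) by norm_num, CharP.cast_eq_zero K 2, zero_mul]
      exact hind _ hsd hsum
    have himg : (Finset.univ.image (fun t : Finset (Fin r) => ∑ v ∈ t, β v)) ⊆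
        P.roots.toFinset := by
      intro z hz
      obtain ⟨t, _, rfl⟩ := Finset.mem_image.1 hz
      rw [Multiset.mem_toFinset, Polynomial.mem_roots hPne]
      exact hroot t
    have hcard1 : 2 ^ r ≤ P.roots.toFinset.card := by
      have himgcard : (Finset.univ.image (fun t : Finset (Fin r) => ∑ v ∈ t, β v)).card
          = 2 ^ r := by
        rw [Finset.card_image_of_injective _ (fun t t' => hzinj t t'), Finset.card_univ,
          Fintype.card_finset, Fintype.card_fin]
      rw [← himgcard]
      exact Finset.card_le_card himg
    have hcard2 : P.roots.toFinset.card ≤ 2 ^ (r - 1) := by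
      calc P.roots.toFinset.card ≤ Multiset.card P.roots := Multiset.toFinset_card_le _
        _ ≤ P.natDegree := Polynomial.card_roots' P
        _ ≤ 2 ^ (r - 1) := hdeg
    have hle := le_trans hcard1 hcard2
    have hlt : (2 : ℕ) ^ (r - 1) < 2 ^ r := Nat.pow_lt_pow_right (by norm_num) (by omega)
    omega
  have hunit : IsUnit M := Matrix.linearIndependent_rows_iff_isUnit.1 hrows
  have hMα : M.mulVec α = 0 := by
    funext l
    have hl := heq (l : ℕ) (lt_of_lt_of_le l.isLt hr)
    simp only [Matrix.mulVec, dotProduct, hM, Matrix.of_apply, Pi.zero_apply]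
    calc ∑ v, β v ^ 2 ^ (l : ℕ) * α v = ∑ v, α v * β v ^ 2 ^ (l : ℕ) :=
          Finset.sum_congr rfl fun v _ => mul_comm _ _
      _ = 0 := hl
  apply Matrix.mulVec_injective_iff_isUnit.2 hunit
  rw [hMα, Matrix.mulVec_zero]

theorem exists_gamma {F : Type*} [Field F] [Fintype F] [CharP F 2] (m' n' r d : ℕ)
    (hd : d ≠ 0) (hmn : m' * n' ≤ 2 ^ d)
    (hcardF : Fintype.card F = 2 ^ (1 + d * r)) :
    ∃ γ : Fin m' × Fin n' → F, ∀ D : Finset (Fin m' × Fin n'),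
      D.card ≤ 2 * r → ∑ e ∈ D, γ e = 0 → D = ∅ := by
  classical
  haveI : Fact (Nat.Prime 2) := ⟨Nat.prime_two⟩
  set K := GaloisField 2 d with hK
  haveI : Fintype K := Fintype.ofFinite _
  have hcardK : Fintype.card K = 2 ^ d := by
    rw [← Nat.card_eq_fintype_card]
    exact GaloisField.card 2 d hd
  -- embedding of the index set into K
  have hembed : Nonempty (Fin m' × Fin n' ↪ K) := by
    rw [Function.Embedding.nonempty_iff_card_le, hcardK]
    simpa using hmn
  obtain ⟨φ⟩ := hembed
  -- the ZMod 2 vector space V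
  letI : Algebra (ZMod 2) F := ZMod.algebra F 2
  have hfrK : Module.finrank (ZMod 2) K = d := GaloisField.finrank 2 hd
  have hfrF : Module.finrank (ZMod 2) F = 1 + d * r := by
    have hb := Module.finBasis (ZMod 2) F
    have := Module.card_fintype hb
    rw [hcardF, ZMod.card, Fintype.card_fin] at this
    exact (Nat.pow_right_injective (le_refl 2) this).symm
  have hfrV : Module.finrank (ZMod 2) (ZMod 2 × (Fin r → K)) = 1 + d * r := by
    rw [Module.finrank_prod, Module.finrank_self, Module.finrank_pi_fintype,
      Finset.sum_const, Finset.card_univ, Fintype.card_fin, smul_eq_mul, hfrK,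
      Nat.mul_comm]
  have L : (ZMod 2 × (Fin r → K)) ≃ₗ[ZMod 2] F :=
    LinearEquiv.ofFinrankEq _ _ (by rw [hfrV, hfrF])
  set v : Fin m' × Fin n' → ZMod 2 × (Fin r → K) :=
    fun e => (1, fun s => φ e ^ (2 * (s : ℕ) + 1)) with hv
  refine ⟨fun e => L (v e), ?_⟩
  intro D hD hsum
  have hsum' : ∑ e ∈ D, v e = 0 := by
    apply L.injective
    rw [map_sum, hsum, map_zero]
  have hfst : ((D.card : ZMod 2)) = 0 := by
    have h1 := congrArg Prod.fst hsum'
    rw [Prod.fst_sum] at h1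
    simpa [hv] using h1
  have hdvd : 2 ∣ D.card := (ZMod.natCast_eq_zero_iff _ _).1 hfst
  have hsnd : ∀ s : Fin r, ∑ e ∈ D, φ e ^ (2 * (s : ℕ) + 1) = 0 := by
    intro s
    have h1 := congrArg Prod.snd hsum'
    rw [Prod.snd_sum] at h1
    have h2 := congrFun h1 s
    rw [Finset.sum_apply] at h2
    simpa [hv] using h2
  -- apply the BCH vanishing lemma to the image of D under φ
  set S := D.image φ with hS
  have hcardS : S.card = D.card := Finset.card_image_of_injective _ φ.injective
  have hps : ∀ s, s < r → ∑ x ∈ S, x ^ (2 * s + 1) = 0 := by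
    intro s hs
    rw [hS, Finset.sum_image (fun a _ b _ hab => φ.injective hab)]
    exact hsnd ⟨s, hs⟩
  have hSempty : S = ∅ := bch_vanish r S (by omega) (by omega) hps
  rw [hS, Finset.image_eq_empty] at hSempty
  exact hSempty

set_option maxHeartbeats 1000000 in
theorem key_kernel {F : Type*} [Field F] [CharP F 2] {m n h : ℕ}
    (hm : 1 ≤ m) (hh : 1 ≤ h) (γ : Fin m × Fin n → F)
    (hγ : ∀ D : Finset (Fin m × Fin n), D.card + 2 ≤ 2 * m + 2 * h → ∑ e ∈ D, γ e = 0 → D = ∅)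
    (E E' F' : Finset (Fin m × Fin n)) (hac : ∀ C ⊆ E', ¬ IsSimpleCycle C)
    (hF' : F'.card ≤ h) (hdecomp : E = E' ∪ F')
    (y : Fin m × Fin n → F) (hflow : IsFlow y) (hsupp : ∀ e, y e ≠ 0 → e ∈ E)
    (hglob : ∀ l : ℕ, l < h → ∑ e, y e * γ e ^ 2 ^ l = 0) : y = 0 := by
  classical
  have h2 : (2 : F) = 0 := by
    have := CharP.cast_eq_zero F 2
    simpa using this
  set s : Set (Fin m × Fin n → F) := {x | ∃ C, C ⊆ E ∧ IsSimpleCycle C ∧ x = chi C} with hs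
  obtain ⟨b, hbsub, hbspan, hbind⟩ := exists_linearIndependent F s
  have hbfin : b.Finite := hbind.setFinite
  set B := hbfin.toFinset with hB
  have hBmem : ∀ {v}, v ∈ B ↔ v ∈ b := fun {v} => hbfin.mem_toFinset
  have hBcoe : (B : Set (Fin m × Fin n → F)) = b := hbfin.coe_toFinset
  -- y lies in the span of B
  have hyspan : y ∈ Submodule.span F (B : Set (Fin m × Fin n → F)) := by
    rw [hBcoe, hbspan]
    exact flow_mem_span h2 E y hflow hsupp
  obtain ⟨α, -, hα⟩ := Submodule.mem_span_finset.1 hyspan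
  -- basic facts about elements of B
  have hBprop : ∀ v ∈ B, ∃ C, C ⊆ E ∧ IsSimpleCycle C ∧ v = chi C := by
    intro v hv
    exact hbsub (hBmem.1 hv)
  have hv01 : ∀ v ∈ B, ∀ e, v e = 0 ∨ v e = 1 := by
    intro v hv e
    obtain ⟨C, _, _, rfl⟩ := hBprop v hv
    by_cases he : e ∈ C
    · exact Or.inr (chi_apply_mem he)
    · exact Or.inl (chi_eq_zero_of_not_mem he)
  have hvflow : ∀ v ∈ B, IsFlow v := by
    intro v hv
    obtain ⟨C, _, hC, rfl⟩ := hBprop v hv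
    exact chi_isFlow h2 hC
  have hvsupp : ∀ v ∈ B, ∀ e, v e ≠ 0 → e ∈ E := by
    intro v hv e he
    obtain ⟨C, hCE, _, rfl⟩ := hBprop v hv
    by_cases heC : e ∈ C
    · exact hCE heC
    · exact absurd (chi_eq_zero_of_not_mem heC) he
  -- the independence of B as a family
  have hBind : LinearIndependent F (fun v : {x // x ∈ B} => (v : Fin m × Fin n → F)) := by
    refine hbind.comp
      (fun v : {x // x ∈ B} => (⟨v.1, hBmem.1 v.2⟩ : {x // x ∈ b})) ?_
    intro v w hvw
    simp only [Subtype.mk.injEq] at hvw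
    exact Subtype.ext hvw
  -- β values
  set β : (Fin m × Fin n → F) → F := fun v => ∑ e, v e * γ e with hβ
  -- subset sums of β do not vanish
  have hind : ∀ sB : Finset (Fin m × Fin n → F), sB ⊆ B → sB.Nonempty →
      ∑ v ∈ sB, β v ≠ 0 := by
    intro sB hsub hne hzero
    set w : Fin m × Fin n → F := ∑ v ∈ sB, v with hw
    -- w ≠ 0 by linear independence
    have hwne : w ≠ 0 := by
      intro hw0
      obtain ⟨v0, hv0⟩ := hne
      have hgzero := Fintype.linearIndependent_iff.1 hBind
        (fun v : {x // x ∈ B} => if (v : Fin m × Fin n → F) ∈ sB then (1 : F) else 0) ?_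
      · have := hgzero ⟨v0, hsub hv0⟩
        simp only [hv0, if_pos] at this
        exact one_ne_zero this
      · rw [Finset.sum_coe_sort B
          (fun u => (if u ∈ sB then (1 : F) else 0) • u)]
        simp only [ite_smul, one_smul, zero_smul]
        rw [← Finset.sum_filter]
        have hfil : B.filter (fun u => u ∈ sB) = sB := by
          rw [Finset.filter_mem_eq_inter, Finset.inter_eq_right.2 hsub]
        rw [hfil, ← hw]
        exact hw0
    -- w is 0/1 valued
    have hw01 : ∀ e, w e = 0 ∨ w e = 1 := by
      intro e
      have hwe : w e = ∑ v ∈ sB, v e := by rw [hw, Finset.sum_apply]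
      rw [hwe]
      refine Finset.sum_induction (M := F) (f := fun v : Fin m × Fin n → F => v e)
        (p := fun z : F => z = 0 ∨ z = 1) ?_ (Or.inl rfl) ?_
      · rintro a b (rfl | rfl) (rfl | rfl)
        · exact Or.inl (by rw [add_zero])
        · exact Or.inr (by rw [zero_add])
        · exact Or.inr (by rw [add_zero])
        · exact Or.inl (by rw [one_add_one_eq_two, h2])
      · intro v hv
        exact hv01 v (hsub hv) e
    have hwflow : IsFlow w := by
      constructor
      · intro i
        calc ∑ j, w (i, j) = ∑ j, ∑ v ∈ sB, v (i, j) := by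
              refine Finset.sum_congr rfl fun j _ => ?_
              rw [hw, Finset.sum_apply]
          _ = ∑ v ∈ sB, ∑ j, v (i, j) := Finset.sum_comm
          _ = 0 := Finset.sum_eq_zero fun v hv => (hvflow v (hsub hv)).1 i
      · intro j
        calc ∑ i, w (i, j) = ∑ i, ∑ v ∈ sB, v (i, j) := by
              refine Finset.sum_congr rfl fun i _ => ?_
              rw [hw, Finset.sum_apply]
          _ = ∑ v ∈ sB, ∑ i, v (i, j) := Finset.sum_comm
          _ = 0 := Finset.sum_eq_zero fun v hv => (hvflow v (hsub hv)).2 j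
    have hwsupp : ∀ e, w e ≠ 0 → e ∈ E := by
      intro e he
      rw [hw, Finset.sum_apply] at he
      obtain ⟨v, hv, hve⟩ := Finset.exists_ne_zero_of_sum_ne_zero he
      exact hvsupp v (hsub hv) e hve
    set D := suppF w with hD
    have hDE : D ⊆ E := fun e he => hwsupp e (mem_suppF.1 he)
    have hDsub : D ⊆ E' ∪ F' := by rw [← hdecomp]; exact hDE
    have hdeg : ∀ j ∈ D.image Prod.snd, 2 ≤ (D.filter (fun e => e.2 = j)).card := by
      intro j hj
      have hfcard : (D.filter (fun e => e.2 = j)).card =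
          (Finset.univ.filter (fun i : Fin m => (i, j) ∈ D)).card := by
        refine Finset.card_bij (fun e _ => e.1) ?_ ?_ ?_
        · intro e he
          obtain ⟨heD, hej⟩ := Finset.mem_filter.1 he
          refine Finset.mem_filter.2 ⟨Finset.mem_univ _, ?_⟩
          have heq : (e.1, j) = e := Prod.ext rfl hej.symm
          rw [heq]
          exact heD
        · intro e1 he1 e2 he2 h12
          obtain ⟨_, hj1⟩ := Finset.mem_filter.1 he1
          obtain ⟨_, hj2⟩ := Finset.mem_filter.1 he2
          exact Prod.ext h12 (hj1.trans hj2.symm)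
        · intro i hi
          obtain ⟨_, hiD⟩ := Finset.mem_filter.1 hi
          exact ⟨(i, j), Finset.mem_filter.2 ⟨hiD, rfl⟩, rfl⟩
      have hsumzero : (((Finset.univ.filter (fun i : Fin m => (i, j) ∈ D)).card : F)) = 0 := by
        rw [← Finset.sum_boole]
        have hterm : ∀ i : Fin m, (if (i, j) ∈ D then (1 : F) else 0) = w (i, j) := by
          intro i
          by_cases hije : (i, j) ∈ D
          · rw [if_pos hije]
            rcases hw01 (i, j) with h0 | h1
            · exact absurd h0 (mem_suppF.1 hije)
            · exact h1.symm
          · rw [if_neg hije]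
            by_contra hne0
            exact hije (mem_suppF.2 fun h0 => hne0 h0.symm)
        rw [Finset.sum_congr rfl fun i _ => hterm i]
        exact hwflow.2 j
      have hdvd : 2 ∣ (Finset.univ.filter (fun i : Fin m => (i, j) ∈ D)).card :=
        (CharP.cast_eq_zero_iff F 2 _).1 hsumzero
      have hpos : 0 < (Finset.univ.filter (fun i : Fin m => (i, j) ∈ D)).card := by
        obtain ⟨e, heD, hej⟩ := Finset.mem_image.1 hj
        refine Finset.card_pos.2 ⟨e.1, Finset.mem_filter.2 ⟨Finset.mem_univ _, ?_⟩⟩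
        have heq : (e.1, j) = e := Prod.ext rfl hej.symm
        rw [heq]
        exact heD
      omega
    have hbound := evenD_card_bound hm hh D E' F' hDsub hac hF' hdeg
    have hβsum : ∑ v ∈ sB, β v = ∑ e ∈ D, γ e := by
      calc ∑ v ∈ sB, β v = ∑ v ∈ sB, ∑ e, v e * γ e := rfl
        _ = ∑ e, ∑ v ∈ sB, v e * γ e := Finset.sum_comm
        _ = ∑ e, w e * γ e := by
            refine Finset.sum_congr rfl fun e _ => ?_
            rw [hw, Finset.sum_apply, Finset.sum_mul]
        _ = ∑ e ∈ D, w e * γ e := by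
            refine (Finset.sum_subset (Finset.subset_univ D) fun e _ heD => ?_).symm
            have : w e = 0 := by
              by_contra hne0
              exact heD (mem_suppF.2 hne0)
            rw [this, zero_mul]
        _ = ∑ e ∈ D, γ e := by
            refine Finset.sum_congr rfl fun e he => ?_
            rcases hw01 e with h0 | h1
            · exact absurd h0 (mem_suppF.1 he)
            · rw [h1, one_mul]
    have hDempty : D = ∅ := hγ D (by omega) (by rw [← hβsum]; exact hzero)
    apply hwne
    funext e
    show w e = 0
    by_contra hwe
    have heD : e ∈ D := mem_suppF.2 hwe
    rw [hDempty] at heD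
    exact Finset.notMem_empty e heD
  -- the submodule of flows supported in E
  set U : Submodule F (Fin m × Fin n → F) :=
    { carrier := {z | IsFlow z ∧ ∀ e, z e ≠ 0 → e ∈ E}
      add_mem' := by
        rintro a b ⟨⟨ha1, ha2⟩, ha3⟩ ⟨⟨hb1, hb2⟩, hb3⟩
        refine ⟨⟨fun i => ?_, fun j => ?_⟩, fun e he => ?_⟩
        · simp only [Pi.add_apply]
          rw [Finset.sum_add_distrib, ha1 i, hb1 i, add_zero]
        · simp only [Pi.add_apply]
          rw [Finset.sum_add_distrib, ha2 j, hb2 j, add_zero]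
        · by_cases hae : a e = 0
          · refine hb3 e fun h0 => he ?_
            simp [Pi.add_apply, hae, h0]
          · exact ha3 e hae
      zero_mem' := ⟨⟨fun i => by simp, fun j => by simp⟩, fun e he => absurd rfl he⟩
      smul_mem' := by
        rintro c a ⟨⟨ha1, ha2⟩, ha3⟩
        refine ⟨⟨fun i => ?_, fun j => ?_⟩, fun e he => ?_⟩
        · simp only [Pi.smul_apply, smul_eq_mul]
          rw [← Finset.mul_sum, ha1 i, mul_zero]
        · simp only [Pi.smul_apply, smul_eq_mul]
          rw [← Finset.mul_sum, ha2 j, mul_zero]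
        · refine ha3 e fun h0 => he ?_
          simp [Pi.smul_apply, h0] } with hU
  have hsU : s ⊆ (U : Set (Fin m × Fin n → F)) := by
    rintro x ⟨C, hCE, hC, rfl⟩
    refine ⟨chi_isFlow h2 hC, fun e he => ?_⟩
    by_cases heC : e ∈ C
    · exact hCE heC
    · exact absurd (chi_eq_zero_of_not_mem heC) he
  have hspanU : Submodule.span F (B : Set (Fin m × Fin n → F)) ≤ U := by
    rw [hBcoe, hbspan]
    exact Submodule.span_le.2 hsU
  set ρ : (Fin m × Fin n → F) →ₗ[F] ({e // e ∈ F'} → F) :=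
    LinearMap.funLeft F F (fun e : {e // e ∈ F'} => (e : Fin m × Fin n)) with hρ
  have hdisj : Disjoint
      (Submodule.span F (Set.range (fun v : {x // x ∈ B} => (v : Fin m × Fin n → F))))
      (LinearMap.ker ρ) := by
    rw [Submodule.disjoint_def]
    intro z hz hzker
    have hrange : Set.range (fun v : {x // x ∈ B} => (v : Fin m × Fin n → F)) =
        (B : Set (Fin m × Fin n → F)) := Subtype.range_coe
    rw [hrange] at hz
    obtain ⟨hzflow, hzsupp⟩ := hspanU hz
    by_contra hzne
    obtain ⟨C, hCsub, hCcyc⟩ := flow_support_cycle hzflow hzne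
    refine hac C ?_ hCcyc
    intro e he
    have hzF' : ∀ e', e' ∈ F' → z e' = 0 := by
      intro e' he'
      have h0 := congrFun (LinearMap.mem_ker.1 hzker) ⟨e', he'⟩
      simpa [hρ, LinearMap.funLeft] using h0
    have hze := mem_suppF.1 (hCsub he)
    have heE : e ∈ E := hzsupp e hze
    rcases Finset.mem_union.1 (hdecomp ▸ heE) with h' | h'
    · exact h'
    · exact absurd (hzF' e h') hze
  have hmapind := hBind.map (f := ρ) hdisj
  have hcardB : B.card ≤ h := by
    have h1 := hmapind.fintype_card_le_finrank
    rw [Module.finrank_pi, Fintype.card_coe, Fintype.card_coe] at h1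
    omega
  -- Moore matrix argument
  set r := B.card with hr
  set eB := B.equivFin with heB
  set βf : Fin r → F := fun a => β ((eB.symm a) : Fin m × Fin n → F) with hβf
  set αf : Fin r → F := fun a => α ((eB.symm a) : Fin m × Fin n → F) with hαf
  have hindf : ∀ st : Finset (Fin r), st.Nonempty → ∑ a ∈ st, βf a ≠ 0 := by
    intro st hst
    set sB := st.image (fun a => ((eB.symm a) : Fin m × Fin n → F)) with hsB
    have hsum : ∑ v ∈ sB, β v = ∑ a ∈ st, βf a := by
      refine Finset.sum_image ?_
      intro a _ b _ hab
      exact eB.symm.injective (Subtype.ext hab)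
    have hsub : sB ⊆ B := by
      intro v hv
      obtain ⟨a, _, rfl⟩ := Finset.mem_image.1 hv
      exact (eB.symm a).2
    intro hzero
    exact hind sB hsub (hst.image _) (by rw [hsum]; exact hzero)
  have heqf : ∀ l, l < h → ∑ a, αf a * βf a ^ 2 ^ l = 0 := by
    intro l hl
    have hvpow : ∀ v ∈ B, ∑ e, v e * γ e ^ 2 ^ l = (β v) ^ 2 ^ l := by
      intro v hv
      obtain ⟨C, hCE, hC, rfl⟩ := hBprop v hv
      have hform : ∀ g : Fin m × Fin n → F, ∑ e, chi C e * g e = ∑ e ∈ C, g e := by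
        intro g
        simp [chi, ite_mul, one_mul, zero_mul, Finset.sum_ite_mem, Finset.univ_inter]
      rw [hform]
      have hβC : β (chi C) = ∑ e ∈ C, γ e := hform γ
      rw [hβC]
      exact (sum_pow_char_pow 2 l C γ).symm
    have hstart := hglob l hl
    have hexpand : ∑ e, y e * γ e ^ 2 ^ l = ∑ v ∈ B, α v * (β v) ^ 2 ^ l := by
      calc ∑ e, y e * γ e ^ 2 ^ l
          = ∑ e, (∑ v ∈ B, α v * v e) * γ e ^ 2 ^ l := by
            refine Finset.sum_congr rfl fun e _ => ?_
            rw [← hα, Finset.sum_apply]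
            simp only [Pi.smul_apply, smul_eq_mul]
        _ = ∑ e, ∑ v ∈ B, α v * v e * γ e ^ 2 ^ l := by
            refine Finset.sum_congr rfl fun e _ => ?_
            rw [Finset.sum_mul]
        _ = ∑ v ∈ B, ∑ e, α v * v e * γ e ^ 2 ^ l := Finset.sum_comm
        _ = ∑ v ∈ B, α v * (β v) ^ 2 ^ l := by
            refine Finset.sum_congr rfl fun v hv => ?_
            rw [← hvpow v hv, Finset.mul_sum]
            refine Finset.sum_congr rfl fun e _ => ?_
            ring
    have hreindex : ∑ v ∈ B, α v * (β v) ^ 2 ^ l = ∑ a, αf a * βf a ^ 2 ^ l := by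
      rw [← Finset.sum_coe_sort B (fun v => α v * (β v) ^ 2 ^ l)]
      exact (Equiv.sum_comp eB.symm
        (fun v : {x // x ∈ B} => α (v : Fin m × Fin n → F) * (β (v : Fin m × Fin n → F)) ^ 2 ^ l)).symm
    rw [← hreindex, ← hexpand]
    exact hstart
  have hαf0 := moore_kill hcardB βf hindf αf heqf
  have hα0 : ∀ v ∈ B, α v = 0 := by
    intro v hv
    have h0 := congrFun hαf0 (eB ⟨v, hv⟩)
    simpa [hαf, Equiv.symm_apply_apply] using h0
  rw [← hα]
  exact Finset.sum_eq_zero fun v hv => by rw [hα0 v hv, zero_smul]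

end St6

open St6

set_option maxHeartbeats 1000000 in
/-- Theorem 3.8, BCH construction.  Let `m ≥ 2`, `h ≥ 1`, `n ≥ 2` a
power of two, and let `2 ^ k` be the least power of two strictly greater than `m`.  Over
any field with `q = 2 * (2 ^ k * n) ^ (m + h - 1)` elements there is an MR
`(m, n, a=1, b=1, h)` grid code which is a Gabidulin construction (with `p = 2`), i.e.
with global parity checks `c^{i,j} = (γ(i,j), γ(i,j)^2, …, γ(i,j)^{2^{h-1}})`. -/
theorem statement6 (m n h k : ℕ) (hm : 2 ≤ m) (hn2 : 2 ≤ n) (hh : 1 ≤ h)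
    (hn : ∃ t : ℕ, n = 2 ^ t)
    (hk : m < 2 ^ k) (hkleast : ∀ k' : ℕ, m < 2 ^ k' → k ≤ k')
    (F : Type*) [Field F] [Fintype F]
    (hcard : Fintype.card F = 2 * (2 ^ k * n) ^ (m + h - 1)) :
    ∃ γ : Fin m × Fin n → F, IsMR F m n h (fun ij l => γ ij ^ 2 ^ (l : ℕ)) := by
  classical
  obtain ⟨t, hnt⟩ := hn
  have hcard2 : Fintype.card F = 2 ^ (1 + (k + t) * (m + h - 1)) := by
    have hpow : 2 * (2 ^ k * 2 ^ t) ^ (m + h - 1) = 2 ^ (1 + (k + t) * (m + h - 1)) := by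
      rw [← pow_add, ← pow_mul, pow_add 2 1 ((k + t) * (m + h - 1)), pow_one]
    rw [hcard, hnt]
    exact hpow
  -- characteristic 2
  have hprime : CharP F (ringChar F) := ringChar.charP F
  obtain ⟨d0, hp2, hFc⟩ := FiniteField.card F (ringChar F)
  have hchar : ringChar F = 2 := by
    have hdvd : ringChar F ∣ 2 ^ (1 + (k + t) * (m + h - 1)) := by
      rw [← hcard2, hFc]
      exact dvd_pow_self _ (by exact_mod_cast d0.ne_zero)
    exact (Nat.prime_dvd_prime_iff_eq hp2 Nat.prime_two).1 (hp2.dvd_of_dvd_pow hdvd)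
  haveI hF2 : CharP F 2 := hchar ▸ hprime
  have hk1 : 1 ≤ k := by
    by_contra hk0
    push_neg at hk0
    have hk00 : k = 0 := by omega
    rw [hk00, pow_zero] at hk
    omega
  have hmn : m * n ≤ 2 ^ (k + t) := by
    rw [pow_add, hnt]
    exact Nat.mul_le_mul (by omega) (le_refl _)
  obtain ⟨γ, hγ⟩ := exists_gamma (F := F) m n (m + h - 1) (k + t) (by omega) hmn hcard2
  refine ⟨γ, ?_⟩
  intro E hE
  obtain ⟨E', F', hac, hF'card, hdecomp⟩ := hE
  set c : Fin m × Fin n → Fin h → F := fun ij l => γ ij ^ 2 ^ (l : ℕ) with hc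
  set A := (gridH F m n h c).submatrix id (fun e : E => (e : Fin m × Fin n)) with hA
  have hker : ∀ x : {e // e ∈ E} → F, A.mulVec x = 0 → x = 0 := by
    intro x hx
    set y : Fin m × Fin n → F := fun e => if he : e ∈ E then x ⟨e, he⟩ else 0 with hy
    have hconv : ∀ g : Fin m × Fin n → F,
        ∑ e : {e // e ∈ E}, g e.1 * x e = ∑ e : Fin m × Fin n, g e * y e := by
      intro g
      calc ∑ e : {e // e ∈ E}, g e.1 * x e
          = ∑ e : {e // e ∈ E}, g e.1 * y e.1 := by
            refine Finset.sum_congr rfl fun e _ => ?_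
            have hye : y e.1 = x e := by
              simp only [hy]
              rw [dif_pos e.2]
            rw [hye]
        _ = ∑ e ∈ E, g e * y e := Finset.sum_coe_sort E (fun e => g e * y e)
        _ = ∑ e : Fin m × Fin n, g e * y e := by
            refine Finset.sum_subset (Finset.subset_univ E) fun e _ he => ?_
            simp only [hy]
            rw [dif_neg he, mul_zero]
    have hx' : ∀ rIdx, (A.mulVec x) rIdx = 0 := fun rIdx => congrFun hx rIdx
    have hAentry : ∀ (rIdx) (e : {e // e ∈ E}),
        A.mulVec x rIdx = ∑ e : {e // e ∈ E}, gridH F m n h c rIdx e.1 * x e := by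
      intro rIdx e
      rfl
    -- row sums
    have hrow : ∀ i : Fin m, ∑ j, y (i, j) = 0 := by
      intro i
      have h1 : ∑ e : {e // e ∈ E}, (if (e : Fin m × Fin n).1 = i then (1 : F) else 0) * x e
          = 0 := hx' (Sum.inl i)
      rw [hconv (fun e => if e.1 = i then (1 : F) else 0)] at h1
      have h3 : ∑ e : Fin m × Fin n, (if e.1 = i then (1 : F) else 0) * y e
          = ∑ j, y (i, j) := by
        rw [Fintype.sum_prod_type]
        have hterm : ∀ i' : Fin m, (∑ j, (if (i', j).1 = i then (1 : F) else 0) * y (i', j))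
            = if i' = i then ∑ j, y (i', j) else 0 := by
          intro i'
          by_cases hii : i' = i
          · rw [if_pos hii]
            exact Finset.sum_congr rfl fun j _ => by rw [if_pos hii, one_mul]
          · rw [if_neg hii]
            exact Finset.sum_eq_zero fun j _ => by rw [if_neg hii, zero_mul]
        rw [Finset.sum_congr rfl fun i' _ => hterm i']
        rw [Finset.sum_ite_eq' Finset.univ i (fun i' => ∑ j, y (i', j)),
          if_pos (Finset.mem_univ i)]
      rw [h3] at h1
      exact h1
    -- partial column sums
    have hcolpart : ∀ j : Fin n, (j : ℕ) < n - 1 → ∑ i, y (i, j) = 0 := by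
      intro j hjlt
      set jn : Fin (n - 1) := ⟨(j : ℕ), hjlt⟩ with hjn
      have h1 : ∑ e : {e // e ∈ E},
          (if ((e : Fin m × Fin n).2 : ℕ) = (jn : ℕ) then (1 : F) else 0) * x e = 0 :=
        hx' (Sum.inr (Sum.inl jn))
      rw [hconv (fun e => if (e.2 : ℕ) = (jn : ℕ) then (1 : F) else 0)] at h1
      have h3 : ∑ e : Fin m × Fin n, (if ((e.2 : ℕ)) = ((jn : ℕ)) then (1 : F) else 0) * y e
          = ∑ i', y (i', j) := by
        rw [Fintype.sum_prod_type]
        refine Finset.sum_congr rfl fun i' _ => ?_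
        have hterm : ∀ j' : Fin n, (if ((j' : ℕ) = (jn : ℕ)) then (1 : F) else 0) * y (i', j')
            = if j' = j then y (i', j') else 0 := by
          intro j'
          by_cases hjj : j' = j
          · rw [if_pos hjj, if_pos (by rw [hjj]), one_mul]
          · rw [if_neg hjj, if_neg (fun hv => hjj (Fin.ext hv)), zero_mul]
        rw [Finset.sum_congr rfl fun j' _ => hterm j']
        rw [Finset.sum_ite_eq' Finset.univ j (fun j' => y (i', j')),
          if_pos (Finset.mem_univ j)]
      rw [h3] at h1
      exact h1
    -- global parity rows
    have hglobrow : ∀ l : Fin h, ∑ e : Fin m × Fin n, y e * γ e ^ 2 ^ (l : ℕ) = 0 := by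
      intro l
      have h1 : ∑ e : {e // e ∈ E}, c (e : Fin m × Fin n) l * x e = 0 :=
        hx' (Sum.inr (Sum.inr l))
      rw [hconv (fun e => c e l)] at h1
      rw [← h1]
      refine Finset.sum_congr rfl fun e _ => ?_
      simp only [hc]
      ring
    -- all column sums
    have hcol : ∀ j : Fin n, ∑ i, y (i, j) = 0 := by
      have htot : ∑ j : Fin n, ∑ i, y (i, j) = 0 := by
        rw [Finset.sum_comm]
        exact Finset.sum_eq_zero fun i _ => hrow i
      set jl : Fin n := ⟨n - 1, by omega⟩ with hjl
      have hothers : ∀ j ∈ Finset.univ.erase jl, ∑ i, y (i, j) = 0 := by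
        intro j hj
        have hne := (Finset.mem_erase.1 hj).1
        have hval : (j : ℕ) ≠ n - 1 := by
          intro hv
          exact hne (Fin.ext (by rw [hv]))
        have hlt : (j : ℕ) < n - 1 := by
          have := j.isLt
          omega
        exact hcolpart j hlt
      have hlast : ∑ i, y (i, jl) = 0 := by
        have hsplit := Finset.add_sum_erase Finset.univ (fun j => ∑ i, y (i, j))
          (Finset.mem_univ jl)
        rw [Finset.sum_eq_zero hothers, add_zero] at hsplit
        exact hsplit.trans htot
      intro j
      by_cases hj : (j : ℕ) < n - 1
      · exact hcolpart j hj
      · have hjeq : j = jl := by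
          apply Fin.ext
          have := j.isLt
          simp only [hjl]
          omega
        rw [hjeq]
        exact hlast
    have hy0 : y = 0 := key_kernel (by omega) hh γ
      (fun D hD hs => hγ D (by omega) hs) E E' F' hac hF'card hdecomp y ⟨hrow, hcol⟩
      (fun e he => by
        by_contra heE
        refine he ?_
        simp only [hy]
        rw [dif_neg heE])
      (fun l hl => hglobrow ⟨l, hl⟩)
    funext e
    have hcf := congrFun hy0 e.1
    simp only [hy] at hcf
    rw [dif_pos e.2] at hcf
    exact hcf
  -- rank computation
  have hkerbot : LinearMap.ker A.mulVecLin = ⊥ := by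
    rw [LinearMap.ker_eq_bot']
    intro x hx0
    apply hker x
    rw [← Matrix.mulVecLin_apply]
    exact hx0
  have hrn := LinearMap.finrank_range_add_finrank_ker A.mulVecLin
  rw [hkerbot, finrank_bot, add_zero] at hrn
  have hdom : Module.finrank F ({e // e ∈ E} → F) = E.card := by
    rw [Module.finrank_pi, Fintype.card_coe]
  exact hrn.trans hdom
end

section
/- Let q be an odd prime power, let n ≥ 3, and suppose A ⊆ F_q is a set of size n with no arithmetic progression of length 3, i.e., there are no distinct x, y, z ∈ A with x + y = 2z. Then there exists an MR (m=3, n, a=1, b=1, h=1) grid code over F_q. -/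
open Finset

section GridHelpers

open Finset

variable {n : ℕ} {F : Type*} [Field F]

lemma exists_ne_of_sum_eq_zero {ι : Type*} [Fintype ι] [DecidableEq ι] {f : ι → F}
    (h : ∑ t, f t = 0) {t0 : ι} (h0 : f t0 ≠ 0) : ∃ t, t ≠ t0 ∧ f t ≠ 0 := by
  by_contra hc
  push_neg at hc
  have : ∑ t, f t = f t0 :=
    Finset.sum_eq_single t0 (fun b _ hb => hc b hb) (by simp)
  exact h0 (this ▸ h)

lemma rsum (e : Fin 3 × Fin n) (r : Fin 3) :
    (∑ jj : Fin n, if (r, jj) = e then (1 : F) else 0) = if r = e.1 then 1 else 0 := by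
  rcases e with ⟨a, b⟩
  by_cases h : r = a
  · subst h
    simp [Prod.ext_iff]
  · simp [Prod.ext_iff, h]

lemma csum (e : Fin 3 × Fin n) (jc : Fin n) :
    (∑ ii : Fin 3, if (ii, jc) = e then (1 : F) else 0) = if jc = e.2 then 1 else 0 := by
  rcases e with ⟨a, b⟩
  by_cases h : jc = b
  · subst h
    simp [Prod.ext_iff]
  · simp [Prod.ext_iff, h]

lemma gsum (e : Fin 3 × Fin n) (g : Fin 3 × Fin n → F) :
    (∑ p : Fin 3 × Fin n, (if p = e then (1 : F) else 0) * g p) = g e := by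
  simp [ite_mul]

lemma isSimpleCycle4 {m n : ℕ} (i i' : Fin m) (j j' : Fin n) (hi : i ≠ i') (hj : j ≠ j') :
    IsSimpleCycle ({(i, j), (i', j), (i, j'), (i', j')} : Finset (Fin m × Fin n)) := by
  refine ⟨2, le_refl 2, (fun ℓ => if ℓ = 0 then i else i'), (fun ℓ => if ℓ = 0 then j else j'),
    ?_, ?_, ?_⟩
  · intro a ha b hb hab
    simp only [Set.mem_Iio] at ha hb
    interval_cases a <;> interval_cases b <;> simp_all
  · intro a ha b hb hab
    simp only [Set.mem_Iio] at ha hb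
    interval_cases a <;> interval_cases b <;> simp_all
  · have h2 : Finset.range 2 = {0, 1} := rfl
    rw [h2]
    ext p
    simp [Finset.mem_insert, Finset.mem_image]
    tauto

lemma isSimpleCycle6 {m n : ℕ} (i0 i1 i2 : Fin m) (j1 j2 j3 : Fin n)
    (hi01 : i0 ≠ i1) (hi12 : i1 ≠ i2) (hi02 : i0 ≠ i2)
    (hj12 : j1 ≠ j2) (hj23 : j2 ≠ j3) (hj13 : j1 ≠ j3) :
    IsSimpleCycle ({(i0, j1), (i1, j1), (i1, j2), (i2, j2), (i2, j3), (i0, j3)} :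
      Finset (Fin m × Fin n)) := by
  refine ⟨3, by norm_num,
    (fun ℓ => if ℓ = 0 then i0 else if ℓ = 1 then i1 else i2),
    (fun ℓ => if ℓ = 0 then j1 else if ℓ = 1 then j2 else j3), ?_, ?_, ?_⟩
  · intro a ha b hb hab
    simp only [Set.mem_Iio] at ha hb
    interval_cases a <;> interval_cases b <;> simp_all
  · intro a ha b hb hab
    simp only [Set.mem_Iio] at ha hb
    interval_cases a <;> interval_cases b <;> simp_all
  · have h3 : Finset.range 3 = {0, 1, 2} := rfl
    rw [h3]
    ext p
    simp [Finset.mem_insert, Finset.mem_image]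
    tauto

lemma fin3_eq_of_ne {i0 i1 i2 i3 : Fin 3} (h01 : i1 ≠ i0) (h20 : i2 ≠ i0) (h21 : i2 ≠ i1)
    (h30 : i3 ≠ i0) (h31 : i3 ≠ i1) : i2 = i3 := by
  have b0 := i0.isLt; have b1 := i1.isLt; have b2 := i2.isLt; have b3 := i3.isLt
  rw [← Fin.val_inj]
  rw [ne_eq, ← Fin.val_inj] at h01 h20 h21 h30 h31
  omega

lemma keyCycle {n : ℕ} (P : Fin 3 × Fin n → Prop)
    (p0 : Fin 3 × Fin n) (hp0 : P p0)
    (hrowd : ∀ p, P p → ∃ j', j' ≠ p.2 ∧ P (p.1, j'))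
    (hcold : ∀ p, P p → ∃ i', i' ≠ p.1 ∧ P (i', p.2)) :
    (∃ i i' j j', i ≠ i' ∧ j ≠ j' ∧ P (i, j) ∧ P (i', j) ∧ P (i, j') ∧ P (i', j'))
    ∨ (∃ (i0 i1 i2 : Fin 3) (j1 j2 j3 : Fin n),
        i0 ≠ i1 ∧ i1 ≠ i2 ∧ i0 ≠ i2 ∧ j1 ≠ j2 ∧ j2 ≠ j3 ∧ j1 ≠ j3 ∧
        P (i0, j1) ∧ P (i1, j1) ∧ P (i1, j2) ∧ P (i2, j2) ∧ P (i2, j3) ∧ P (i0, j3)) := by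
  by_cases h4 : ∃ i i' j j', i ≠ i' ∧ j ≠ j' ∧ P (i, j) ∧ P (i', j) ∧ P (i, j') ∧ P (i', j')
  · exact Or.inl h4
  push_neg at h4
  right
  obtain ⟨i0, j0⟩ := p0
  obtain ⟨i1, hi1, hP10⟩ := hcold (i0, j0) hp0
  obtain ⟨j1, hj1, hP01⟩ := hrowd (i0, j0) hp0
  obtain ⟨i2, hi2, hP21⟩ := hcold (i0, j1) hP01
  have hi21 : i2 ≠ i1 := by
    rintro rfl
    exact h4 i0 i2 j0 j1 (Ne.symm hi2) (Ne.symm hj1) hp0 hP10 hP01 hP21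
  obtain ⟨j2, hj2, hP12⟩ := hrowd (i1, j0) hP10
  have hj21 : j2 ≠ j1 := by
    rintro rfl
    exact h4 i0 i1 j0 j2 (Ne.symm hi1) (Ne.symm hj2) hp0 hP10 hP01 hP12
  obtain ⟨i3, hi3, hP32⟩ := hcold (i1, j2) hP12
  have hi30 : i3 ≠ i0 := by
    rintro rfl
    exact h4 i3 i1 j0 j2 (Ne.symm hi1) (Ne.symm hj2) hp0 hP10 hP32 hP12
  have hi23 : i2 = i3 := fin3_eq_of_ne hi1 hi2 hi21 hi30 hi3
  subst hi23
  exact ⟨i0, i1, i2, j0, j2, j1, Ne.symm hi1, Ne.symm hi3, Ne.symm hi2,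
    Ne.symm hj2, hj21, Ne.symm hj1, hp0, hP10, hP12, hP32, hP21, hP01⟩

/-- A nonzero "flow" (all row and column sums vanish) cannot be supported on an
acyclic edge set. -/
lemma noflow (E' : Finset (Fin 3 × Fin n)) (hacyc : IsAcyclicEdges E')
    (Y : Fin 3 × Fin n → F)
    (hrow : ∀ i : Fin 3, ∑ j, Y (i, j) = 0)
    (hcol : ∀ j : Fin n, ∑ i, Y (i, j) = 0)
    (hsupp : ∀ p, Y p ≠ 0 → p ∈ E') : ∀ p, Y p = 0 := by
  classical
  intro p
  by_contra hp
  have hrowd : ∀ q : Fin 3 × Fin n, Y q ≠ 0 → ∃ j', j' ≠ q.2 ∧ Y (q.1, j') ≠ 0 := by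
    rintro ⟨qi, qj⟩ hq
    obtain ⟨t, ht, ht0⟩ := exists_ne_of_sum_eq_zero (hrow qi) hq
    exact ⟨t, ht, ht0⟩
  have hcold : ∀ q : Fin 3 × Fin n, Y q ≠ 0 → ∃ i', i' ≠ q.1 ∧ Y (i', q.2) ≠ 0 := by
    rintro ⟨qi, qj⟩ hq
    obtain ⟨t, ht, ht0⟩ := exists_ne_of_sum_eq_zero (hcol qj) hq
    exact ⟨t, ht, ht0⟩
  rcases keyCycle (fun q => Y q ≠ 0) p hp hrowd hcold with
    ⟨i, i', j, j', hii, hjj, h1, h2, h3, h4⟩ |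
    ⟨i0, i1, i2, j1, j2, j3, hi01, hi12, hi02, hj12, hj23, hj13, g1, g2, g3, g4, g5, g6⟩
  · refine hacyc ({(i, j), (i', j), (i, j'), (i', j')} : Finset (Fin 3 × Fin n)) ?_
      (isSimpleCycle4 i i' j j' hii hjj)
    intro q hq
    simp only [Finset.mem_insert, Finset.mem_singleton] at hq
    rcases hq with rfl | rfl | rfl | rfl
    exacts [hsupp _ h1, hsupp _ h2, hsupp _ h3, hsupp _ h4]
  · refine hacyc ({(i0, j1), (i1, j1), (i1, j2), (i2, j2), (i2, j3), (i0, j3)} :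
      Finset (Fin 3 × Fin n)) ?_ (isSimpleCycle6 i0 i1 i2 j1 j2 j3 hi01 hi12 hi02 hj12 hj23 hj13)
    intro q hq
    simp only [Finset.mem_insert, Finset.mem_singleton] at hq
    rcases hq with rfl | rfl | rfl | rfl | rfl | rfl
    exacts [hsupp _ g1, hsupp _ g2, hsupp _ g3, hsupp _ g4, hsupp _ g5, hsupp _ g6]


lemma alpha_ne (h2 : (2 : F) ≠ 0) : ∀ i i' : Fin 3, i ≠ i' → ((i : ℕ) : F) ≠ ((i' : ℕ) : F) := by
  have ha : (0:F) ≠ 1 := zero_ne_one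
  have hb : (0:F) ≠ 2 := fun h => h2 h.symm
  have hc : (1:F) ≠ 2 := fun h => one_ne_zero (α := F) (by linear_combination -h)
  intro i i' hii
  fin_cases i <;> fin_cases i' <;> simp_all <;> norm_num <;> tauto

lemma cyc6_ne (a : Fin n → F)
    (haA : ∀ j1 j2 j3 : Fin n, j1 ≠ j2 → j2 ≠ j3 → j1 ≠ j3 → a j1 + a j2 ≠ 2 * a j3)
    (i0 i1 i2 : Fin 3) (j1 j2 j3 : Fin n)
    (hi01 : i0 ≠ i1) (hi12 : i1 ≠ i2) (hi02 : i0 ≠ i2)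
    (hj12 : j1 ≠ j2) (hj23 : j2 ≠ j3) (hj13 : j1 ≠ j3) :
    ((i0 : ℕ) : F) * a j1 - ((i1 : ℕ) : F) * a j1 + ((i1 : ℕ) : F) * a j2
      - ((i2 : ℕ) : F) * a j2 + ((i2 : ℕ) : F) * a j3 - ((i0 : ℕ) : F) * a j3 ≠ 0 := by
  intro h
  fin_cases i0 <;> fin_cases i1 <;> fin_cases i2
  all_goals try exact hi01 rfl
  all_goals try exact hi12 rfl
  all_goals try exact hi02 rfl
  all_goals norm_num at h
  · exact haA j1 j2 j3 hj12 hj23 hj13 (by linear_combination -h)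
  · exact haA j2 j3 j1 hj23 (Ne.symm hj13) (Ne.symm hj12) (by linear_combination h)
  · exact haA j1 j3 j2 hj13 (Ne.symm hj23) hj12 (by linear_combination h)
  · exact haA j1 j3 j2 hj13 (Ne.symm hj23) hj12 (by linear_combination -h)
  · exact haA j2 j3 j1 hj23 (Ne.symm hj13) (Ne.symm hj12) (by linear_combination -h)
  · exact haA j1 j2 j3 hj12 hj23 hj13 (by linear_combination h)

lemma finish_core (a : Fin n → F)
    (E' Fs : Finset (Fin 3 × Fin n)) (hacyc : IsAcyclicEdges E') (hFs : Fs.card ≤ 1)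
    (X : Fin 3 × Fin n → F)
    (hsupp : ∀ p, X p ≠ 0 → p ∈ E' ∪ Fs)
    (hrow : ∀ i : Fin 3, ∑ j, X (i, j) = 0)
    (hcol : ∀ j : Fin n, ∑ i, X (i, j) = 0)
    (hG : ∑ p : Fin 3 × Fin n, ((p.1 : ℕ) : F) * a p.2 * X p = 0)
    (C : Finset (Fin 3 × Fin n)) (hC : IsSimpleCycle C)
    (hCX : ∀ q ∈ C, X q ≠ 0)
    (Z : Fin 3 × Fin n → F)
    (hZrow : ∀ i : Fin 3, ∑ j, Z (i, j) = 0)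
    (hZcol : ∀ j : Fin n, ∑ i, Z (i, j) = 0)
    (hZC : ∀ p, Z p ≠ 0 → p ∈ C)
    (hZsq : ∀ p ∈ C, Z p * Z p = 1)
    (hZsum : ∑ p : Fin 3 × Fin n, ((p.1 : ℕ) : F) * a p.2 * Z p ≠ 0) :
    False := by
  classical
  have hCE : C ⊆ E' ∪ Fs := fun q hq => hsupp q (hCX q hq)
  have hnot : ¬ C ⊆ E' := fun h => hacyc C h hC
  obtain ⟨f, hfC, hfE'⟩ := Finset.not_subset.mp hnot
  have hfFs : f ∈ Fs := by
    have := hCE hfC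
    rw [Finset.mem_union] at this
    tauto
  have hFs_eq : Fs = {f} :=
    Finset.eq_singleton_iff_unique_mem.mpr
      ⟨hfFs, fun b hb => Finset.card_le_one.mp hFs b hb f hfFs⟩
  set lam : F := X f * Z f with hlam
  set Y : Fin 3 × Fin n → F := fun p => X p - lam * Z p with hYdef
  have hYf : Y f = 0 := by
    have hs := hZsq f hfC
    show X f - X f * Z f * Z f = 0
    rw [mul_assoc, hs, mul_one, sub_self]
  have hYsupp : ∀ p, Y p ≠ 0 → p ∈ E' := by
    intro p hYp
    by_contra hpE'
    have hpf : p = f := by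
      by_cases hZp : Z p = 0
      · have hXp : X p ≠ 0 := by
          intro h
          apply hYp
          show X p - lam * Z p = 0
          rw [h, hZp, mul_zero, sub_zero]
        have := hsupp p hXp
        rw [hFs_eq, Finset.mem_union, Finset.mem_singleton] at this
        tauto
      · have hpC := hZC p hZp
        have := hCE hpC
        rw [hFs_eq, Finset.mem_union, Finset.mem_singleton] at this
        tauto
    rw [hpf] at hYp
    exact hYp hYf
  have hYrow : ∀ i : Fin 3, ∑ j, Y (i, j) = 0 := by
    intro i
    show ∑ j, (X (i, j) - lam * Z (i, j)) = 0
    rw [Finset.sum_sub_distrib, hrow i, ← Finset.mul_sum, hZrow i, mul_zero, sub_zero]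
  have hYcol : ∀ j : Fin n, ∑ i, Y (i, j) = 0 := by
    intro j
    show ∑ i, (X (i, j) - lam * Z (i, j)) = 0
    rw [Finset.sum_sub_distrib, hcol j, ← Finset.mul_sum, hZcol j, mul_zero, sub_zero]
  have hY0 := noflow E' hacyc Y hYrow hYcol hYsupp
  have hXZ : ∀ p, X p = lam * Z p := by
    intro p
    have h0 : X p - lam * Z p = 0 := hY0 p
    exact sub_eq_zero.mp h0
  have hkey : lam * (∑ p : Fin 3 × Fin n, ((p.1 : ℕ) : F) * a p.2 * Z p) = 0 := by
    rw [Finset.mul_sum, ← hG]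
    refine Finset.sum_congr rfl fun p _ => ?_
    rw [hXZ p]
    ring
  rcases mul_eq_zero.mp hkey with h | h
  · have hXf := hCX f hfC
    rw [hXZ f, h, zero_mul] at hXf
    exact hXf rfl
  · exact hZsum h

lemma core (a : Fin n → F) (h2 : (2 : F) ≠ 0)
    (haA : ∀ j1 j2 j3 : Fin n, j1 ≠ j2 → j2 ≠ j3 → j1 ≠ j3 → a j1 + a j2 ≠ 2 * a j3)
    (ha : Function.Injective a)
    (E' Fs : Finset (Fin 3 × Fin n)) (hacyc : IsAcyclicEdges E') (hFs : Fs.card ≤ 1)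
    (X : Fin 3 × Fin n → F)
    (hsupp : ∀ p, X p ≠ 0 → p ∈ E' ∪ Fs)
    (hrow : ∀ i : Fin 3, ∑ j, X (i, j) = 0)
    (hcol : ∀ j : Fin n, ∑ i, X (i, j) = 0)
    (hG : ∑ p : Fin 3 × Fin n, ((p.1 : ℕ) : F) * a p.2 * X p = 0) :
    ∀ p, X p = 0 := by
  classical
  by_contra hX
  push_neg at hX
  obtain ⟨p0, hp0⟩ := hX
  have hrowd : ∀ q : Fin 3 × Fin n, X q ≠ 0 → ∃ j', j' ≠ q.2 ∧ X (q.1, j') ≠ 0 := by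
    rintro ⟨qi, qj⟩ hq
    obtain ⟨t, ht, ht0⟩ := exists_ne_of_sum_eq_zero (hrow qi) hq
    exact ⟨t, ht, ht0⟩
  have hcold : ∀ q : Fin 3 × Fin n, X q ≠ 0 → ∃ i', i' ≠ q.1 ∧ X (i', q.2) ≠ 0 := by
    rintro ⟨qi, qj⟩ hq
    obtain ⟨t, ht, ht0⟩ := exists_ne_of_sum_eq_zero (hcol qj) hq
    exact ⟨t, ht, ht0⟩
  rcases keyCycle (fun q => X q ≠ 0) p0 hp0 hrowd hcold with
    ⟨i, i', j, j', hii, hjj, h1, hb1, hc1, hd1⟩ |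
    ⟨i0, i1, i2, j1, j2, j3, hi01, hi12, hi02, hj12, hj23, hj13, g1, g2, g3, g4, g5, g6⟩
  · -- 4-cycle case
    set C : Finset (Fin 3 × Fin n) := {(i, j), (i', j), (i, j'), (i', j')} with hCdef
    set Z : Fin 3 × Fin n → F := fun p =>
      (if p = (i, j) then (1 : F) else 0) - (if p = (i', j) then 1 else 0)
        - (if p = (i, j') then 1 else 0) + (if p = (i', j') then 1 else 0) with hZdef
    refine finish_core a E' Fs hacyc hFs X hsupp hrow hcol hG C
      (isSimpleCycle4 i i' j j' hii hjj) ?_ Z ?_ ?_ ?_ ?_ ?_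
    · intro q hq
      simp only [hCdef, Finset.mem_insert, Finset.mem_singleton] at hq
      rcases hq with rfl | rfl | rfl | rfl
      exacts [h1, hb1, hc1, hd1]
    · intro r
      show (∑ jj, ((if ((r : Fin 3), jj) = (i, j) then (1 : F) else 0)
          - (if (r, jj) = (i', j) then 1 else 0) - (if (r, jj) = (i, j') then 1 else 0)
          + (if (r, jj) = (i', j') then 1 else 0))) = 0
      simp only [Finset.sum_add_distrib, Finset.sum_sub_distrib, rsum]
      ring
    · intro jc
      show (∑ ii, ((if ((ii : Fin 3), jc) = (i, j) then (1 : F) else 0)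
          - (if (ii, jc) = (i', j) then 1 else 0) - (if (ii, jc) = (i, j') then 1 else 0)
          + (if (ii, jc) = (i', j') then 1 else 0))) = 0
      simp only [Finset.sum_add_distrib, Finset.sum_sub_distrib, csum]
      ring
    · intro p hZp
      by_contra hpC
      simp only [hCdef, Finset.mem_insert, Finset.mem_singleton] at hpC
      push_neg at hpC
      apply hZp
      simp [hZdef, hpC.1, hpC.2.1, hpC.2.2.1, hpC.2.2.2]
    · intro p hp
      simp only [hCdef, Finset.mem_insert, Finset.mem_singleton] at hp
      rcases hp with rfl | rfl | rfl | rfl <;>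
        simp [hZdef, Prod.ext_iff, hii, hjj, Ne.symm hii, Ne.symm hjj]
    · have hval : (∑ p : Fin 3 × Fin n, ((p.1 : ℕ) : F) * a p.2 * Z p)
          = ((i : ℕ) : F) * a j - ((i' : ℕ) : F) * a j - ((i : ℕ) : F) * a j'
            + ((i' : ℕ) : F) * a j' := by
        simp only [hZdef, mul_sub, mul_add, Finset.sum_add_distrib, Finset.sum_sub_distrib,
          mul_ite, mul_one, mul_zero]
        simp [Finset.sum_ite_eq']
      rw [hval]
      have : ((i : ℕ) : F) * a j - ((i' : ℕ) : F) * a j - ((i : ℕ) : F) * a j'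
          + ((i' : ℕ) : F) * a j' = (((i : ℕ) : F) - ((i' : ℕ) : F)) * (a j - a j') := by ring
      rw [this]
      exact mul_ne_zero (sub_ne_zero.mpr (alpha_ne h2 i i' hii)) (sub_ne_zero.mpr (ha.ne hjj))
  · -- 6-cycle case
    set C : Finset (Fin 3 × Fin n) :=
      {(i0, j1), (i1, j1), (i1, j2), (i2, j2), (i2, j3), (i0, j3)} with hCdef
    set Z : Fin 3 × Fin n → F := fun p =>
      (if p = (i0, j1) then (1 : F) else 0) - (if p = (i1, j1) then 1 else 0)
        + (if p = (i1, j2) then 1 else 0) - (if p = (i2, j2) then 1 else 0)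
        + (if p = (i2, j3) then 1 else 0) - (if p = (i0, j3) then 1 else 0) with hZdef
    refine finish_core a E' Fs hacyc hFs X hsupp hrow hcol hG C
      (isSimpleCycle6 i0 i1 i2 j1 j2 j3 hi01 hi12 hi02 hj12 hj23 hj13) ?_ Z ?_ ?_ ?_ ?_ ?_
    · intro q hq
      simp only [hCdef, Finset.mem_insert, Finset.mem_singleton] at hq
      rcases hq with rfl | rfl | rfl | rfl | rfl | rfl
      exacts [g1, g2, g3, g4, g5, g6]
    · intro r
      show (∑ jj, ((if ((r : Fin 3), jj) = (i0, j1) then (1 : F) else 0)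
          - (if (r, jj) = (i1, j1) then 1 else 0) + (if (r, jj) = (i1, j2) then 1 else 0)
          - (if (r, jj) = (i2, j2) then 1 else 0) + (if (r, jj) = (i2, j3) then 1 else 0)
          - (if (r, jj) = (i0, j3) then 1 else 0))) = 0
      simp only [Finset.sum_add_distrib, Finset.sum_sub_distrib, rsum]
      ring
    · intro jc
      show (∑ ii, ((if ((ii : Fin 3), jc) = (i0, j1) then (1 : F) else 0)
          - (if (ii, jc) = (i1, j1) then 1 else 0) + (if (ii, jc) = (i1, j2) then 1 else 0)
          - (if (ii, jc) = (i2, j2) then 1 else 0) + (if (ii, jc) = (i2, j3) then 1 else 0)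
          - (if (ii, jc) = (i0, j3) then 1 else 0))) = 0
      simp only [Finset.sum_add_distrib, Finset.sum_sub_distrib, csum]
      ring
    · intro p hZp
      by_contra hpC
      simp only [hCdef, Finset.mem_insert, Finset.mem_singleton] at hpC
      push_neg at hpC
      apply hZp
      simp [hZdef, hpC.1, hpC.2.1, hpC.2.2.1, hpC.2.2.2.1, hpC.2.2.2.2.1, hpC.2.2.2.2.2]
    · intro p hp
      simp only [hCdef, Finset.mem_insert, Finset.mem_singleton] at hp
      rcases hp with rfl | rfl | rfl | rfl | rfl | rfl <;>
        simp [hZdef, Prod.ext_iff, hi01, hi12, hi02, hj12, hj23, hj13,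
          Ne.symm hi01, Ne.symm hi12, Ne.symm hi02, Ne.symm hj12, Ne.symm hj23, Ne.symm hj13]
    · have hval : (∑ p : Fin 3 × Fin n, ((p.1 : ℕ) : F) * a p.2 * Z p)
          = ((i0 : ℕ) : F) * a j1 - ((i1 : ℕ) : F) * a j1 + ((i1 : ℕ) : F) * a j2
            - ((i2 : ℕ) : F) * a j2 + ((i2 : ℕ) : F) * a j3 - ((i0 : ℕ) : F) * a j3 := by
        simp only [hZdef, mul_sub, mul_add, Finset.sum_add_distrib, Finset.sum_sub_distrib,
          mul_ite, mul_one, mul_zero]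
        simp [Finset.sum_ite_eq']
      rw [hval]
      exact cyc6_ne a haA i0 i1 i2 j1 j2 j3 hi01 hi12 hi02 hj12 hj23 hj13

end GridHelpers

/-- Theorem 3.10.  Let `q` be an odd prime power (i.e. `F` a finite
field of odd cardinality), `n ≥ 3`, and let `A ⊆ F_q` have size `n` and contain no
3-term arithmetic progression: no pairwise distinct `x, y, z ∈ A` satisfy `x + y = 2z`.
Then there exists an MR `(m=3, n, a=1, b=1, h=1)` grid code over `F_q`. -/
theorem statement8 (n : ℕ) (hn : 3 ≤ n)
    (F : Type*) [Field F] [Fintype F] (hodd : Odd (Fintype.card F))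
    (A : Finset F) (hA : A.card = n)
    (h3AP : ∀ x ∈ A, ∀ y ∈ A, ∀ z ∈ A, x ≠ y → y ≠ z → x ≠ z → x + y ≠ 2 * z) :
    ∃ c : Fin 3 × Fin n → Fin 1 → F, IsMR F 3 n 1 c := by
  classical
  set e : ↥A ≃ Fin n := A.equivFinOfCardEq hA with he
  set a : Fin n → F := fun j => ((e.symm j : A) : F) with hadef
  have ha_mem : ∀ j, a j ∈ A := fun j => (e.symm j).2
  have ha_inj : Function.Injective a := by
    intro j j' h
    exact e.symm.injective (Subtype.ext h)
  have haA : ∀ j1 j2 j3 : Fin n, j1 ≠ j2 → j2 ≠ j3 → j1 ≠ j3 → a j1 + a j2 ≠ 2 * a j3 := by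
    intro j1 j2 j3 h12 h23 h13
    exact h3AP (a j1) (ha_mem j1) (a j2) (ha_mem j2) (a j3) (ha_mem j3)
      (fun h => h12 (ha_inj h)) (fun h => h23 (ha_inj h)) (fun h => h13 (ha_inj h))
  have h2 : (2 : F) ≠ 0 := by
    intro h
    have hd : ringChar F ∣ 2 := by
      have h' : ((2 : ℕ) : F) = 0 := by exact_mod_cast h
      exact (ringChar.spec F 2).mp h'
    have hne1 : ringChar F ≠ 1 := CharP.ringChar_ne_one
    have hchar : ringChar F = 2 := by
      rcases (Nat.dvd_prime Nat.prime_two).mp hd with h1 | h1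
      · exact absurd h1 hne1
      · exact h1
    have heven := FiniteField.even_card_iff_char_two.mp hchar
    rw [Nat.odd_iff] at hodd
    omega
  set c : Fin 3 × Fin n → Fin 1 → F := fun p _ => ((p.1 : ℕ) : F) * a p.2 with hc
  refine ⟨c, ?_⟩
  intro E hEex
  obtain ⟨E', Fs, hacyc, hFs, hE⟩ := hEex
  set M : Matrix (Fin 3 ⊕ (Fin (n - 1) ⊕ Fin 1)) (↥E) F :=
    (gridH F 3 n 1 c).submatrix id (fun e : E => (e : Fin 3 × Fin n)) with hM
  have hinj : Function.Injective M.mulVecLin := by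
    rw [← LinearMap.ker_eq_bot, LinearMap.ker_eq_bot']
    intro x hx
    have hx' : M.mulVec x = 0 := hx
    set X : Fin 3 × Fin n → F := fun p => if hp : p ∈ E then x ⟨p, hp⟩ else 0 with hXdef
    have hXsum : ∀ r, (∑ p : Fin 3 × Fin n, gridH F 3 n 1 c r p * X p) = 0 := by
      intro r
      have h1 : (∑ p : Fin 3 × Fin n, gridH F 3 n 1 c r p * X p)
          = ∑ p ∈ E, gridH F 3 n 1 c r p * X p :=
        (Finset.sum_subset E.subset_univ (fun p _ hp => by simp [hXdef, hp])).symm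
      rw [h1, ← Finset.sum_attach E (fun p => gridH F 3 n 1 c r p * X p)]
      have h2' : ∀ q : {p // p ∈ E}, gridH F 3 n 1 c r q.1 * X q.1 = M r q * x q := by
        intro q
        simp [hXdef, q.2, hM, Matrix.submatrix_apply]
      calc ∑ q ∈ E.attach, gridH F 3 n 1 c r q.1 * X q.1
          = ∑ q ∈ E.attach, M r q * x q := Finset.sum_congr rfl (fun q _ => h2' q)
        _ = M.mulVec x r := by
            rw [Matrix.mulVec, dotProduct, Finset.univ_eq_attach]
        _ = 0 := by rw [hx']; rfl
    have hrow : ∀ i : Fin 3, ∑ j, X (i, j) = 0 := by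
      intro i
      have h := hXsum (Sum.inl i)
      rw [Fintype.sum_prod_type] at h
      simpa [gridH, ite_mul, Finset.sum_ite_eq'] using h
    have hcolpre : ∀ j : Fin n, (j : ℕ) < n - 1 → ∑ i, X (i, j) = 0 := by
      intro j hj
      have h := hXsum (Sum.inr (Sum.inl ⟨(j : ℕ), hj⟩))
      rw [Fintype.sum_prod_type] at h
      simpa [gridH, ite_mul, Fin.val_inj, Finset.sum_ite_eq'] using h
    have hcol : ∀ j : Fin n, ∑ i, X (i, j) = 0 := by
      intro j
      by_cases hj : (j : ℕ) < n - 1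
      · exact hcolpre j hj
      · have htot : ∑ j' : Fin n, ∑ i, X (i, j') = 0 := by
          rw [Finset.sum_comm]
          simp [hrow]
        have hsingle : ∑ j' : Fin n, ∑ i, X (i, j') = ∑ i, X (i, j) := by
          refine Finset.sum_eq_single j (fun b _ hb => hcolpre b ?_)
            (fun h => absurd (Finset.mem_univ j) h)
          have hbj : (b : ℕ) ≠ (j : ℕ) := fun hh => hb (Fin.val_inj.mp hh)
          have := b.isLt
          have := j.isLt
          omega
        rw [← hsingle, htot]
    have hG : ∑ p : Fin 3 × Fin n, ((p.1 : ℕ) : F) * a p.2 * X p = 0 := by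
      have h := hXsum (Sum.inr (Sum.inr 0))
      simpa [gridH, hc] using h
    have hsupp : ∀ p, X p ≠ 0 → p ∈ E' ∪ Fs := by
      intro p hp
      by_contra hcon
      have hpE : p ∉ E := by rw [hE]; exact hcon
      simp [hXdef, hpE] at hp
    have hall := core a h2 haA ha_inj E' Fs hacyc hFs X hsupp hrow hcol hG
    funext q
    have hq := hall (q : Fin 3 × Fin n)
    simpa [hXdef, q.2] using hq
  rw [Matrix.rank, LinearMap.finrank_range_of_inj hinj,
    Module.finrank_fintype_fun_eq_card]
  exact Fintype.card_coe E
end
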